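/- arXiv:2110.05826 — 4 statements merged into one kernel-verified Lean document; each statement's English description precedes it below -/
import Mathlib

section
/- Flexible symmetrization: let t > 0 and a ∈ (0,1) be such that 4(1−a)² n t² ≥ 2. Then P( sup_{A ∈ 𝒜} (μ_n(A) − μ(A)) ≥ t ) ≤ 2·P( sup_{A ∈ 𝒜} (μ_n(A) − μ_n'(A)) ≥ a t ), and likewise P( sup_{A ∈ 𝒜} (μ(A) − μ_n(A)) ≥ t ) ≤ 2·P( sup_{A ∈ 𝒜} (μ_n(A) − μ_n'(A)) ≥ a t ). -/
open MeasureTheory ProbabilityTheory Set Filter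
open scoped ENNReal NNReal BigOperators Topology

noncomputable section

/-- The shattering coefficient `S_𝒜(m)` of a class of sets `𝒜` in `ℝ^d`. -/
def shatterCoeff {d : ℕ} (𝒜 : Set (Set (Fin d → ℝ))) (m : ℕ) : ℕ :=
  ⨆ x : Fin m → (Fin d → ℝ), ((fun A => A ∩ Set.range x) '' 𝒜).ncard

/-- A class of sets is pointwise measurable if it admits an at most countable subclass
`𝒜₀` such that every indicator of a set in `𝒜` is a pointwise limit of indicators of
sets of `𝒜₀`. -/
def PointwiseMeasurable {d : ℕ} (𝒜 : Set (Set (Fin d → ℝ))) : Prop :=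
  ∃ 𝒜₀ ⊆ 𝒜, 𝒜₀.Countable ∧ ∀ A ∈ 𝒜, ∃ B : ℕ → Set (Fin d → ℝ),
    (∀ m, B m ∈ 𝒜₀) ∧ ∀ x : Fin d → ℝ,
      Filter.Tendsto (fun m => (B m).indicator (fun _ => (1:ℝ)) x)
        Filter.atTop (nhds (A.indicator (fun _ => (1:ℝ)) x))

/-- The empirical measure `μ_n(A)` of the sample `X_1, …, X_n` evaluated at `A`. -/
def empMeas {Ω : Type*} {d n : ℕ} (X : Fin n → Ω → (Fin d → ℝ)) (ω : Ω)
    (A : Set (Fin d → ℝ)) : ℝ :=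
  (∑ i : Fin n, A.indicator (fun _ => (1:ℝ)) (X i ω)) / n

namespace FlexSym

variable {d n : ℕ}

/-- empirical value of a sample vector -/
def emp (x : Fin n → (Fin d → ℝ)) (A : Set (Fin d → ℝ)) : ℝ := empMeas (fun i y => y i) x A

lemma indicator_mem_Icc (A : Set (Fin d → ℝ)) (x : Fin d → ℝ) :
    A.indicator (fun _ => (1:ℝ)) x ∈ Set.Icc (0:ℝ) 1 := by
  by_cases h : x ∈ A <;> simp [Set.indicator_apply, h]

lemma emp_mem_Icc (hn : 0 < n) (x : Fin n → (Fin d → ℝ)) (A : Set (Fin d → ℝ)) :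
    emp x A ∈ Set.Icc (0:ℝ) 1 := by
  have h1 : (0:ℝ) ≤ ∑ i : Fin n, A.indicator (fun _ => (1:ℝ)) (x i) :=
    Finset.sum_nonneg fun i _ => (indicator_mem_Icc A (x i)).1
  have h2 : ∑ i : Fin n, A.indicator (fun _ => (1:ℝ)) (x i) ≤ (n : ℝ) := by
    calc ∑ i : Fin n, A.indicator (fun _ => (1:ℝ)) (x i)
        ≤ ∑ _i : Fin n, (1:ℝ) := Finset.sum_le_sum fun i _ => (indicator_mem_Icc A (x i)).2
      _ = (n:ℝ) := by simp
  have hn' : (0:ℝ) < n := by exact_mod_cast hn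
  unfold emp empMeas
  constructor
  · exact div_nonneg h1 hn'.le
  · rw [div_le_one hn']; exact h2

lemma measurable_emp {A : Set (Fin d → ℝ)} (hA : MeasurableSet A) :
    Measurable (fun x : Fin n → (Fin d → ℝ) => emp x A) := by
  apply Measurable.div_const
  exact Finset.measurable_sum _ fun i _ =>
    (measurable_const.indicator hA).comp (measurable_pi_apply i)

lemma tendsto_emp {A : Set (Fin d → ℝ)} {B : ℕ → Set (Fin d → ℝ)}
    (h : ∀ x : Fin d → ℝ, Tendsto (fun m => (B m).indicator (fun _ => (1:ℝ)) x) atTop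
      (nhds (A.indicator (fun _ => (1:ℝ)) x))) (x : Fin n → (Fin d → ℝ)) :
    Tendsto (fun m => emp x (B m)) atTop (nhds (emp x A)) := by
  unfold emp empMeas
  exact Tendsto.div_const (tendsto_finset_sum _ fun i _ => h (x i)) _

lemma tendsto_toReal (μ : Measure (Fin d → ℝ)) [IsProbabilityMeasure μ]
    {A : Set (Fin d → ℝ)} {B : ℕ → Set (Fin d → ℝ)}
    (hA : MeasurableSet A) (hB : ∀ m, MeasurableSet (B m))
    (h : ∀ x, Tendsto (fun m => (B m).indicator (fun _ => (1:ℝ)) x) atTop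
      (𝓝 (A.indicator (fun _ => (1:ℝ)) x))) :
    Tendsto (fun m => (μ (B m)).toReal) atTop (𝓝 (μ A).toReal) := by
  have key : ∀ s : Set (Fin d → ℝ), MeasurableSet s →
      (μ s).toReal = ∫ x, s.indicator (fun _ => (1:ℝ)) x ∂μ := by
    intro s hs; rw [integral_indicator_const (1:ℝ) hs]; simp; rfl
  simp only [key _ (hB _), key _ hA]
  exact tendsto_integral_of_dominated_convergence (fun _ => 1)
    (fun m => (measurable_const.indicator (hB m)).aestronglyMeasurable)
    (integrable_const 1)
    (fun m => Filter.Eventually.of_forall fun x => by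
      have h1 := (indicator_mem_Icc (B m) x).1
      have h2 := (indicator_mem_Icc (B m) x).2
      rw [Real.norm_eq_abs, abs_le]
      exact ⟨le_trans (by norm_num : (-1:ℝ) ≤ 0) h1, le_trans h2 (by norm_num : (1:ℝ) ≤ 1)⟩)
    (Filter.Eventually.of_forall fun x => h x)

lemma bddAbove_range_of_le {ι : Type*} {f : ι → ℝ} {C : ℝ} (hb : ∀ i, f i ≤ C) :
    BddAbove (Set.range f) := ⟨C, by rintro y ⟨i, rfl⟩; exact hb i⟩

lemma setOf_le_iSup_eq {α : Type*} (g : ℕ → α → ℝ) (C : ℝ) (hb : ∀ k x, g k x ≤ C) (c : ℝ) :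
    {x | c ≤ ⨆ k, g k x} = ⋂ m : ℕ, ⋃ k, {x | c - 1/(m+1) < g k x} := by
  ext x
  simp only [Set.mem_setOf_eq, Set.mem_iInter, Set.mem_iUnion]
  constructor
  · intro h m
    by_contra hc
    push_neg at hc
    have : (⨆ k, g k x) ≤ c - 1/(m+1) := ciSup_le fun k => hc k
    have hm : (0:ℝ) < 1/(m+1) := by positivity
    linarith
  · intro h
    have h1 : ∀ m : ℕ, c - 1/(m+1) ≤ ⨆ k, g k x := by
      intro m
      obtain ⟨k, hk⟩ := h m
      exact hk.le.trans (le_ciSup (bddAbove_range_of_le (fun k => hb k x)) k)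
    have h2 : Tendsto (fun m : ℕ => c - 1/(m+1)) atTop (𝓝 c) := by
      have := tendsto_one_div_add_atTop_nhds_zero_nat (𝕜 := ℝ)
      simpa using tendsto_const_nhds.sub this
    exact le_of_tendsto h2 (Filter.Eventually.of_forall h1)

lemma measurableSet_le_iSup {α : Type*} [MeasurableSpace α] (g : ℕ → α → ℝ) (C : ℝ)
    (hb : ∀ k x, g k x ≤ C) (hg : ∀ k, Measurable (g k)) (c : ℝ) :
    MeasurableSet {x | c ≤ ⨆ k, g k x} := by
  rw [setOf_le_iSup_eq g C hb c]
  exact MeasurableSet.iInter fun m => MeasurableSet.iUnion fun k =>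
    measurableSet_lt measurable_const (hg k)

lemma iInter_setOf_sub_le {α : Type*} (g : α → ℝ) (c : ℝ) :
    ⋂ m : ℕ, {x | c - 1/(m+1) ≤ g x} = {x | c ≤ g x} := by
  ext x
  simp only [Set.mem_iInter, Set.mem_setOf_eq]
  constructor
  · intro h
    have h2 : Tendsto (fun m : ℕ => c - 1/(m+1)) atTop (𝓝 c) := by
      have := tendsto_one_div_add_atTop_nhds_zero_nat (𝕜 := ℝ)
      simpa using tendsto_const_nhds.sub this
    exact le_of_tendsto h2 (Filter.Eventually.of_forall h)
  · intro h m
    have hm : (0:ℝ) ≤ 1/(m+1) := by positivity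
    linarith

lemma iSup_subtype_eq_iSup_range {α : Type*} {𝒜 𝒜₀ : Set α} (hsub : 𝒜₀ ⊆ 𝒜)
    {e : ℕ → α} (he : Set.range e = 𝒜₀) (f : α → ℝ) (C : ℝ)
    (hb : ∀ A ∈ 𝒜, f A ≤ C) (hne : 𝒜.Nonempty)
    (happ : ∀ A ∈ 𝒜, ∃ B : ℕ → α, (∀ m, B m ∈ 𝒜₀) ∧
      Tendsto (fun m => f (B m)) atTop (𝓝 (f A))) :
    ⨆ A : 𝒜, f ↑A = ⨆ k, f (e k) := by
  haveI : Nonempty 𝒜 := hne.to_subtype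
  have hbdd : BddAbove (Set.range fun k => f (e k)) :=
    bddAbove_range_of_le (fun k => hb (e k) (hsub (he ▸ Set.mem_range_self k)))
  apply le_antisymm
  · refine ciSup_le fun A => ?_
    obtain ⟨B, hB, hBt⟩ := happ A A.2
    refine le_of_tendsto hBt (Filter.Eventually.of_forall fun m => ?_)
    obtain ⟨k, hk⟩ := he ▸ hB m
    exact hk ▸ le_ciSup hbdd k
  · refine ciSup_le fun k => ?_
    have hmem : e k ∈ 𝒜 := hsub (he ▸ Set.mem_range_self k)
    exact le_ciSup (bddAbove_range_of_le (ι := 𝒜) (fun A => hb A.1 A.2)) (⟨e k, hmem⟩ : 𝒜)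

lemma key {α : Type*} [MeasurableSpace α] (ρ : Measure α) [IsProbabilityMeasure ρ]
    (f : ℕ → α → ℝ) (p : ℕ → ℝ) (t b ε : ℝ) (hε : 0 < ε)
    (hf : ∀ k, Measurable (f k))
    (hfb : ∀ k x, f k x ∈ Set.Icc (0:ℝ) 1)
    (hG : ∀ k, 2⁻¹ ≤ ρ {y | f k y - p k ≤ b}) :
    ρ {x | t ≤ ⨆ k, (f k x - p k)} ≤
      2 * (ρ.prod ρ) {q : α × α | t - b - ε ≤ ⨆ k, (f k q.1 - f k q.2)} := by
  set Q : ℕ → Set α := fun k => {x | t - ε < f k x - p k} with hQ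
  have hQm : ∀ k, MeasurableSet (Q k) := fun k =>
    measurableSet_lt measurable_const ((hf k).sub_const _)
  set D : ℕ → Set α := disjointed Q with hD
  have hDm : ∀ k, MeasurableSet (D k) := MeasurableSet.disjointed hQm
  have hDdis : Pairwise (Function.onFun Disjoint D) := disjoint_disjointed Q
  set G : ℕ → Set α := fun k => {y | f k y - p k ≤ b} with hGdef
  have hGm : ∀ k, MeasurableSet (G k) := fun k =>
    measurableSet_le ((hf k).sub_const _) measurable_const
  have hEQ : {x | t ≤ ⨆ k, (f k x - p k)} ⊆ ⋃ k, Q k := by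
    intro x hx
    by_contra hc
    simp only [Set.mem_iUnion, hQ, Set.mem_setOf_eq, not_exists, not_lt] at hc
    have : (⨆ k, (f k x - p k)) ≤ t - ε := ciSup_le hc
    have := le_trans hx this
    linarith
  have hRF : ∀ k, D k ×ˢ G k ⊆ {q : α × α | t - b - ε ≤ ⨆ k, (f k q.1 - f k q.2)} := by
    intro k q hq
    obtain ⟨hq1, hq2⟩ := hq
    have h1 : t - ε < f k q.1 - p k := disjointed_subset Q k hq1
    have h2 : f k q.2 - p k ≤ b := hq2
    have h3 : t - b - ε ≤ f k q.1 - f k q.2 := by linarith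
    have hbd : BddAbove (Set.range fun k => f k q.1 - f k q.2) :=
      bddAbove_range_of_le (C := 1) (fun j => by
        have := (hfb j q.1).2; have := (hfb j q.2).1; linarith)
    exact h3.trans (le_ciSup hbd k)
  calc ρ {x | t ≤ ⨆ k, (f k x - p k)} ≤ ρ (⋃ k, Q k) := measure_mono hEQ
    _ = ρ (⋃ k, D k) := by rw [hD, iUnion_disjointed]
    _ = ∑' k, ρ (D k) := measure_iUnion hDdis hDm
    _ ≤ ∑' k, 2 * ((ρ.prod ρ) (D k ×ˢ G k)) := by
        refine ENNReal.tsum_le_tsum fun k => ?_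
        rw [Measure.prod_prod]
        calc ρ (D k) = 2 * (ρ (D k) * 2⁻¹) := by
              rw [mul_comm (ρ (D k)) _, ← mul_assoc,
                ENNReal.mul_inv_cancel two_ne_zero ENNReal.ofNat_ne_top, one_mul]
          _ ≤ 2 * (ρ (D k) * ρ (G k)) := by
              gcongr
              exact hG k
    _ = 2 * ∑' k, (ρ.prod ρ) (D k ×ˢ G k) := by rw [ENNReal.tsum_mul_left]
    _ = 2 * (ρ.prod ρ) (⋃ k, D k ×ˢ G k) := by
        rw [measure_iUnion (fun i j hij => Set.Disjoint.set_prod_left (hDdis hij) _ _)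
          (fun k => (hDm k).prod (hGm k))]
    _ ≤ 2 * (ρ.prod ρ) {q : α × α | t - b - ε ≤ ⨆ k, (f k q.1 - f k q.2)} := by
        gcongr
        exact Set.iUnion_subset hRF

lemma cheb {Ω : Type*} [MeasurableSpace Ω] (P : Measure Ω) [IsProbabilityMeasure P]
    (hn : 0 < n) (W : Fin n → Ω → ℝ) (p0 : ℝ)
    (hmeas : ∀ i, Measurable (W i)) (hb : ∀ i ω, W i ω ∈ Set.Icc (0:ℝ) 1)
    (hmean : ∀ i, P[W i] = p0)
    (hind : Pairwise (fun i j => IndepFun (W i) (W j) P))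
    {c : ℝ} (hc : 0 < c) (hc2 : 1/(2*(n:ℝ)) ≤ c^2) :
    P {ω | c ≤ |(∑ i, W i ω)/n - p0|} ≤ 2⁻¹ := by
  have hn' : (0:ℝ) < n := by exact_mod_cast hn
  set S : Ω → ℝ := fun ω => (n:ℝ)⁻¹ * ∑ i, W i ω with hS
  have hWl2 : ∀ i, MemLp (W i) 2 P := fun i =>
    memLp_of_bounded (Filter.Eventually.of_forall (hb i)) (hmeas i).aestronglyMeasurable 2
  have hWint : ∀ i, Integrable (W i) P := fun i => (hWl2 i).integrable one_le_two
  have hsuml2 : MemLp (fun ω => ∑ i, W i ω) 2 P := by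
    have := memLp_finset_sum' (μ := P) (p := 2) Finset.univ (fun i (_ : i ∈ Finset.univ) => hWl2 i)
    convert this using 1
    funext ω
    simp
  have hSl2 : MemLp S 2 P := hsuml2.const_mul _
  have hmeanS : P[S] = p0 := by
    rw [hS]
    rw [integral_const_mul]
    rw [integral_finset_sum Finset.univ (fun i _ => hWint i)]
    simp only [hmean]
    rw [Finset.sum_const, Finset.card_univ, Fintype.card_fin, nsmul_eq_mul]
    field_simp
  have hvar_each : ∀ i, variance (W i) P ≤ 1/4 := by
    intro i
    have h := variance_le_sq_of_bounded (μ := P) (a := 0) (b := 1)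
      (Filter.Eventually.of_forall (hb i)) (hmeas i).aemeasurable
    norm_num at h
    linarith
  have hvar_sum : variance (∑ i, W i) P = ∑ i, variance (W i) P :=
    IndepFun.variance_sum (fun i _ => hWl2 i) (fun i _ j _ hij => hind hij)
  have hvarS : variance S P ≤ 1/(4*(n:ℝ)) := by
    have h1 : variance S P = ((n:ℝ)⁻¹)^2 * variance (fun ω => ∑ i, W i ω) P :=
      variance_const_mul _ _ _
    have h2 : (fun ω => ∑ i, W i ω) = (∑ i, W i) := by funext ω; simp
    rw [h1, h2, hvar_sum]
    have h3 : ∑ i, variance (W i) P ≤ (n:ℝ) * (1/4) := by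
      calc ∑ i : Fin n, variance (W i) P ≤ ∑ _i : Fin n, (1/4 : ℝ) :=
            Finset.sum_le_sum fun i _ => hvar_each i
        _ = (n:ℝ) * (1/4) := by simp [mul_comm]
    calc ((n:ℝ)⁻¹)^2 * ∑ i, variance (W i) P ≤ ((n:ℝ)⁻¹)^2 * ((n:ℝ) * (1/4)) := by
          gcongr
      _ = 1/(4*(n:ℝ)) := by field_simp
  have hcheb := meas_ge_le_variance_div_sq (μ := P) hSl2 hc
  rw [hmeanS] at hcheb
  have hreal : variance S P / c^2 ≤ 1/2 := by
    have hvnn : 0 ≤ variance S P := variance_nonneg _ _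
    rw [div_le_iff₀ (by positivity)]
    have h4 : 1/(4*(n:ℝ)) = (1/2) * (1/(2*(n:ℝ))) := by field_simp; ring
    nlinarith
  have hofreal : ENNReal.ofReal (variance S P / c^2) ≤ 2⁻¹ := by
    calc ENNReal.ofReal (variance S P / c^2) ≤ ENNReal.ofReal (1/2) :=
          ENNReal.ofReal_le_ofReal hreal
      _ = 2⁻¹ := by
          rw [ENNReal.ofReal_div_of_pos (by norm_num)]
          simp [ENNReal.div_eq_inv_mul]
  have hsetEq : {ω | c ≤ |(∑ i, W i ω)/(n:ℝ) - p0|} = {ω | c ≤ |S ω - p0|} := by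
    ext ω; simp [hS, div_eq_inv_mul]
  rw [hsetEq]
  exact hcheb.trans hofreal

end FlexSym

/-- **Flexible symmetrization.** If `t > 0`, `a ∈ (0,1)` and `4(1−a)² n t² ≥ 2`, then the
one-sided deviation probabilities of `μ_n` from `μ` are bounded by twice the deviation
probability between `μ_n` and the ghost empirical measure `μ_n'` at level `a t`. -/
theorem flexible_symmetrization
    {Ω : Type*} [MeasurableSpace Ω] (P : Measure Ω) [IsProbabilityMeasure P]
    {d n : ℕ} (hn : 0 < n)
    (μ : Measure (Fin d → ℝ)) [IsProbabilityMeasure μ]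
    (X X' : Fin n → Ω → (Fin d → ℝ))
    (hXmeas : ∀ i, Measurable (X i)) (hX'meas : ∀ i, Measurable (X' i))
    (hXlaw : ∀ i, Measure.map (X i) P = μ)
    (hX'law : ∀ i, Measure.map (X' i) P = μ)
    (hindep : iIndepFun (Sum.elim X X') P)
    (𝒜 : Set (Set (Fin d → ℝ))) (h𝒜ne : 𝒜.Nonempty)
    (h𝒜meas : ∀ A ∈ 𝒜, MeasurableSet A) (h𝒜pm : PointwiseMeasurable 𝒜)
    (t a : ℝ) (ht : 0 < t) (ha : a ∈ Set.Ioo (0:ℝ) 1)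
    (hcond : 2 ≤ 4 * (1 - a) ^ 2 * n * t ^ 2) :
    P {ω | t ≤ ⨆ A : 𝒜, (empMeas X ω ↑A - (μ ↑A).toReal)} ≤
        2 * P {ω | a * t ≤ ⨆ A : 𝒜, (empMeas X ω ↑A - empMeas X' ω ↑A)} ∧
    P {ω | t ≤ ⨆ A : 𝒜, ((μ ↑A).toReal - empMeas X ω ↑A)} ≤
        2 * P {ω | a * t ≤ ⨆ A : 𝒜, (empMeas X ω ↑A - empMeas X' ω ↑A)} := by
  classical
  obtain ⟨ha0, ha1⟩ := ha
  obtain ⟨𝒜₀, hsub, hcount, happrox⟩ := h𝒜pm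
  obtain ⟨A₀, hA₀⟩ := h𝒜ne
  have h𝒜ne : 𝒜.Nonempty := ⟨A₀, hA₀⟩
  have h𝒜₀ne : 𝒜₀.Nonempty := by
    obtain ⟨B, hB, -⟩ := happrox A₀ hA₀
    exact ⟨B 0, hB 0⟩
  obtain ⟨e, he⟩ := hcount.exists_eq_range h𝒜₀ne
  have he' : Set.range e = 𝒜₀ := he.symm
  have hek : ∀ k, e k ∈ 𝒜 := fun k => hsub (he' ▸ Set.mem_range_self k)
  have hekm : ∀ k, MeasurableSet (e k) := fun k => h𝒜meas _ (hek k)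
  set p : ℕ → ℝ := fun k => (μ (e k)).toReal with hp
  have htoReal_mem : ∀ A : Set (Fin d → ℝ), (μ A).toReal ∈ Set.Icc (0:ℝ) 1 := by
    intro A
    refine ⟨ENNReal.toReal_nonneg, ?_⟩
    have h1 : μ A ≤ 1 := prob_le_one
    have := ENNReal.toReal_mono ENNReal.one_ne_top h1
    simpa using this
  have hempIcc : ∀ (ω : Ω) (A : Set (Fin d → ℝ)), empMeas X ω A ∈ Set.Icc (0:ℝ) 1 :=
    fun ω A => FlexSym.emp_mem_Icc hn (fun i => X i ω) A
  have hempIcc' : ∀ (ω : Ω) (A : Set (Fin d → ℝ)), empMeas X' ω A ∈ Set.Icc (0:ℝ) 1 :=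
    fun ω A => FlexSym.emp_mem_Icc hn (fun i => X' i ω) A
  set ν : Measure (Fin n → Fin d → ℝ) := Measure.pi (fun _ : Fin n => μ) with hν
  haveI : IsProbabilityMeasure ν := by rw [hν]; infer_instance
  set Y : Ω → (Fin n ⊕ Fin n) → (Fin d → ℝ) := fun ω s => Sum.elim X X' s ω with hYdef
  have hYmeas : Measurable Y := by
    apply measurable_pi_lambda
    intro s
    cases s with
    | inl i => exact hXmeas i
    | inr i => exact hX'meas i
  set Z : Ω → ((Fin n → Fin d → ℝ) × (Fin n → Fin d → ℝ)) :=
    fun ω => (fun i => X i ω, fun i => X' i ω) with hZdef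
  have hZmeas : Measurable Z :=
    (measurable_pi_lambda _ fun i => hXmeas i).prodMk (measurable_pi_lambda _ fun i => hX'meas i)
  have hYXmeas : Measurable (fun ω (i : Fin n) => X i ω) := measurable_pi_lambda _ fun i => hXmeas i
  have hYX'meas : Measurable (fun ω (i : Fin n) => X' i ω) :=
    measurable_pi_lambda _ fun i => hX'meas i
  -- identification of the joint law
  have hmapY : Measure.map Y P = Measure.pi (fun _ : Fin n ⊕ Fin n => μ) := by
    refine (Measure.pi_eq fun s hs => ?_).symm
    rw [Measure.map_apply hYmeas (MeasurableSet.univ_pi hs)]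
    have hpre : Y ⁻¹' (Set.pi Set.univ s) = ⋂ i ∈ Finset.univ, (Sum.elim X X' i) ⁻¹' (s i) := by
      ext ω
      simp [hYdef, Set.mem_pi]
    rw [hpre, hindep.measure_inter_preimage_eq_mul Finset.univ (fun i _ => hs i)]
    refine Finset.prod_congr rfl fun i _ => ?_
    cases i with
    | inl j => rw [show Sum.elim X X' (Sum.inl j) = X j from rfl,
        ← Measure.map_apply (hXmeas j) (hs (Sum.inl j)), hXlaw j]
    | inr j => rw [show Sum.elim X X' (Sum.inr j) = X' j from rfl,
        ← Measure.map_apply (hX'meas j) (hs (Sum.inr j)), hX'law j]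
  have hmapZ : Measure.map Z P = ν.prod ν := by
    have hZY : Z = (MeasurableEquiv.sumPiEquivProdPi (fun _ : Fin n ⊕ Fin n => (Fin d → ℝ))) ∘ Y :=
      rfl
    rw [hZY, ← Measure.map_map (MeasurableEquiv.measurable _) hYmeas, hmapY,
      (measurePreserving_sumPiEquivProdPi (fun _ : Fin n ⊕ Fin n => μ)).map_eq]
  have hlawX : Measure.map (fun ω (i : Fin n) => X i ω) P = ν := by
    have h1 : (fun ω (i : Fin n) => X i ω) = Prod.fst ∘ Z := rfl
    rw [h1, ← Measure.map_map measurable_fst hZmeas, hmapZ, Measure.map_fst_prod]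
    simp
  have hlawX' : Measure.map (fun ω (i : Fin n) => X' i ω) P = ν := by
    have h1 : (fun ω (i : Fin n) => X' i ω) = Prod.snd ∘ Z := rfl
    rw [h1, ← Measure.map_map measurable_snd hZmeas, hmapZ, Measure.map_snd_prod]
    simp
  -- Chebyshev bound for the ghost sample
  have hc0 : 0 < (1 - a) * t := mul_pos (by linarith) ht
  have hn' : (0:ℝ) < n := by exact_mod_cast hn
  have hc2 : 1/(2*(n:ℝ)) ≤ ((1-a)*t)^2 := by
    rw [div_le_iff₀ (by positivity)]
    nlinarith
  have hcheb : ∀ k : ℕ,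
      P {ω | (1-a)*t ≤ |(∑ i, (e k).indicator (fun _ => (1:ℝ)) (X' i ω))/(n:ℝ) - p k|} ≤ 2⁻¹ := by
    intro k
    refine FlexSym.cheb P hn (fun i ω => (e k).indicator (fun _ => (1:ℝ)) (X' i ω)) (p k)
      (fun i => (measurable_const.indicator (hekm k)).comp (hX'meas i))
      (fun i ω => FlexSym.indicator_mem_Icc _ _) ?_ ?_ hc0 hc2
    · intro i
      have h1 : P[fun ω => (e k).indicator (fun _ => (1:ℝ)) (X' i ω)]
          = ∫ v, (e k).indicator (fun _ => (1:ℝ)) v ∂(Measure.map (X' i) P) :=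
        (integral_map (hX'meas i).aemeasurable
          (measurable_const.indicator (hekm k)).aestronglyMeasurable).symm
      rw [h1, hX'law i, integral_indicator_const (1:ℝ) (hekm k)]
      simp [hp]; rfl
    · intro i j hij
      have h := hindep.indepFun (show (Sum.inr i : Fin n ⊕ Fin n) ≠ Sum.inr j by
        simp [hij])
      exact h.comp (measurable_const.indicator (hekm k)) (measurable_const.indicator (hekm k))
  -- transfer the Chebyshev bound to ν, in both orientations
  have hSmeasfun : ∀ k : ℕ, Measurable (fun ω => (∑ i, (e k).indicator (fun _ => (1:ℝ))
      (X' i ω))/(n:ℝ) - p k) := fun k =>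
    ((Finset.measurable_sum _ fun i _ =>
      (measurable_const.indicator (hekm k)).comp (hX'meas i)).div_const _).sub_const _
  have hGtrans : ∀ (k : ℕ) (U : Set (Fin n → Fin d → ℝ)), MeasurableSet U →
      ({ω | ¬ ((1-a)*t ≤ |(∑ i, (e k).indicator (fun _ => (1:ℝ)) (X' i ω))/(n:ℝ) - p k|)} ⊆
        (fun ω (i : Fin n) => X' i ω) ⁻¹' U) → 2⁻¹ ≤ ν U := by
    intro k U hU hsubU
    have h1 : ν U = P ((fun ω (i : Fin n) => X' i ω) ⁻¹' U) := by
      rw [← hlawX', Measure.map_apply hYX'meas hU]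
    have hTmeas : MeasurableSet {ω | (1-a)*t ≤
        |(∑ i, (e k).indicator (fun _ => (1:ℝ)) (X' i ω))/(n:ℝ) - p k|} :=
      measurableSet_le measurable_const (hSmeasfun k).abs
    have h2 : P {ω | (1-a)*t ≤
        |(∑ i, (e k).indicator (fun _ => (1:ℝ)) (X' i ω))/(n:ℝ) - p k|}ᶜ
        ≤ P ((fun ω (i : Fin n) => X' i ω) ⁻¹' U) := by
      apply measure_mono
      intro ω hω
      exact hsubU hω
    have h3 : (2⁻¹ : ℝ≥0∞) ≤ P {ω | (1-a)*t ≤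
        |(∑ i, (e k).indicator (fun _ => (1:ℝ)) (X' i ω))/(n:ℝ) - p k|}ᶜ := by
      rw [prob_compl_eq_one_sub hTmeas]
      calc (2⁻¹ : ℝ≥0∞) = 1 - 2⁻¹ := ENNReal.one_sub_inv_two.symm
        _ ≤ 1 - P {ω | (1-a)*t ≤
            |(∑ i, (e k).indicator (fun _ => (1:ℝ)) (X' i ω))/(n:ℝ) - p k|} :=
          tsub_le_tsub_left (hcheb k) 1
    rw [h1]
    exact h3.trans h2
  have hG1 : ∀ k, 2⁻¹ ≤ ν {y | FlexSym.emp y (e k) - p k ≤ (1-a)*t} := by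
    intro k
    refine hGtrans k _ (measurableSet_le ((FlexSym.measurable_emp (hekm k)).sub_const _)
      measurable_const) ?_
    intro ω hω
    simp only [Set.mem_setOf_eq, not_le] at hω
    have h2 := (abs_lt.mp hω).2
    show FlexSym.emp (fun i => X' i ω) (e k) - p k ≤ (1-a)*t
    show (∑ i, (e k).indicator (fun _ => (1:ℝ)) (X' i ω))/(n:ℝ) - p k ≤ (1-a)*t
    linarith
  have hG2 : ∀ k, 2⁻¹ ≤ ν {y | (1 - FlexSym.emp y (e k)) - (1 - p k) ≤ (1-a)*t} := by
    intro k
    refine hGtrans k _ (measurableSet_le ((measurable_const.sub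
      (FlexSym.measurable_emp (hekm k))).sub_const _) measurable_const) ?_
    intro ω hω
    simp only [Set.mem_setOf_eq, not_le] at hω
    have h2 := (abs_lt.mp hω).1
    show (1 - FlexSym.emp (fun i => X' i ω) (e k)) - (1 - p k) ≤ (1-a)*t
    show (1 - (∑ i, (e k).indicator (fun _ => (1:ℝ)) (X' i ω))/(n:ℝ)) - (1 - p k) ≤ (1-a)*t
    linarith
  -- the symmetrized events on the product space
  set g0 : ℕ → ((Fin n → Fin d → ℝ) × (Fin n → Fin d → ℝ)) → ℝ :=
    fun k q => FlexSym.emp q.1 (e k) - FlexSym.emp q.2 (e k) with hg0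
  have hg0b : ∀ k q, g0 k q ≤ 1 := by
    intro k q
    have h1 := (FlexSym.emp_mem_Icc hn q.1 (e k)).2
    have h2 := (FlexSym.emp_mem_Icc hn q.2 (e k)).1
    simp only [hg0]
    linarith
  have hg0meas : ∀ k, Measurable (g0 k) := fun k =>
    ((FlexSym.measurable_emp (hekm k)).comp measurable_fst).sub
      ((FlexSym.measurable_emp (hekm k)).comp measurable_snd)
  set S₀ : Set ((Fin n → Fin d → ℝ) × (Fin n → Fin d → ℝ)) :=
    {q | a*t ≤ ⨆ k, g0 k q} with hS₀def
  set F : ℕ → Set ((Fin n → Fin d → ℝ) × (Fin n → Fin d → ℝ)) :=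
    fun m => {q | a*t - 1/(m+1) ≤ ⨆ k, g0 k q} with hFdef
  have hS₀meas : MeasurableSet S₀ := FlexSym.measurableSet_le_iSup g0 1 hg0b hg0meas _
  have hFmeas : ∀ m, MeasurableSet (F m) := fun m =>
    FlexSym.measurableSet_le_iSup g0 1 hg0b hg0meas _
  have hFanti : Antitone F := by
    intro m m' hmm' q hq
    simp only [hFdef, Set.mem_setOf_eq] at hq ⊢
    have h1 : 1/((m':ℝ)+1) ≤ 1/((m:ℝ)+1) := by
      apply one_div_le_one_div_of_le (by positivity)
      have : (m:ℝ) ≤ m' := by exact_mod_cast hmm'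
      linarith
    linarith
  have hFinter : ⋂ m, F m = S₀ := FlexSym.iInter_setOf_sub_le (fun q => ⨆ k, g0 k q) (a*t)
  have hFtendsto : Tendsto (fun m => 2 * (ν.prod ν) (F m)) atTop (𝓝 (2 * (ν.prod ν) S₀)) := by
    rw [← hFinter]
    exact ENNReal.Tendsto.const_mul
      (tendsto_measure_iInter_atTop (fun m => (hFmeas m).nullMeasurableSet) hFanti
        ⟨0, measure_ne_top _ _⟩) (Or.inr ENNReal.ofNat_ne_top)
  -- key estimates
  have hkey1 : ∀ m : ℕ, ν {x | t ≤ ⨆ k, (FlexSym.emp x (e k) - p k)} ≤ 2 * (ν.prod ν) (F m) := by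
    intro m
    have hεpos : (0:ℝ) < 1/((m:ℝ)+1) := by positivity
    have hk := FlexSym.key ν (fun k x => FlexSym.emp x (e k)) p t ((1-a)*t) (1/((m:ℝ)+1)) hεpos
      (fun k => FlexSym.measurable_emp (hekm k)) (fun k x => FlexSym.emp_mem_Icc hn x (e k)) hG1
    rw [show t - (1-a)*t - 1/((m:ℝ)+1) = a*t - 1/((m:ℝ)+1) by ring] at hk
    exact hk
  have hkey2 : ∀ m : ℕ, ν {x | t ≤ ⨆ k, (p k - FlexSym.emp x (e k))} ≤ 2 * (ν.prod ν) (F m) := by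
    intro m
    have hεpos : (0:ℝ) < 1/((m:ℝ)+1) := by positivity
    have hk := FlexSym.key ν (fun k x => 1 - FlexSym.emp x (e k)) (fun k => 1 - p k) t
      ((1-a)*t) (1/((m:ℝ)+1)) hεpos
      (fun k => measurable_const.sub (FlexSym.measurable_emp (hekm k)))
      (fun k x => by
        have h1 := (FlexSym.emp_mem_Icc hn x (e k)).1
        have h2 := (FlexSym.emp_mem_Icc hn x (e k)).2
        constructor <;> simp <;> linarith) hG2
    rw [show t - (1-a)*t - 1/((m:ℝ)+1) = a*t - 1/((m:ℝ)+1) by ring] at hk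
    simp only [show ∀ u v : ℝ, (1 - u) - (1 - v) = v - u from fun u v => by ring] at hk
    -- now hk's RHS event is the swap of F m
    have hswap : {q : (Fin n → Fin d → ℝ) × (Fin n → Fin d → ℝ) |
        a*t - 1/((m:ℝ)+1) ≤ ⨆ k, (FlexSym.emp q.2 (e k) - FlexSym.emp q.1 (e k))} =
        Prod.swap ⁻¹' (F m) := rfl
    rw [hswap] at hk
    have hmeasure_swap : (ν.prod ν) (Prod.swap ⁻¹' (F m)) = (ν.prod ν) (F m) := by
      rw [← Measure.map_apply measurable_swap (hFmeas m), Measure.prod_swap]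
    rw [hmeasure_swap] at hk
    exact hk
  have hlim1 : ν {x | t ≤ ⨆ k, (FlexSym.emp x (e k) - p k)} ≤ 2 * (ν.prod ν) S₀ :=
    ge_of_tendsto hFtendsto (Filter.Eventually.of_forall hkey1)
  have hlim2 : ν {x | t ≤ ⨆ k, (p k - FlexSym.emp x (e k))} ≤ 2 * (ν.prod ν) S₀ :=
    ge_of_tendsto hFtendsto (Filter.Eventually.of_forall hkey2)
  -- reduction of the suprema over 𝒜 to suprema over the countable subclass
  have happ_emp : ∀ (x : Fin n → Fin d → ℝ) (A : Set (Fin d → ℝ)), A ∈ 𝒜 →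
      ∃ B : ℕ → Set (Fin d → ℝ), (∀ m, B m ∈ 𝒜₀) ∧
        (∀ v, Tendsto (fun m => (B m).indicator (fun _ => (1:ℝ)) v) atTop
          (𝓝 (A.indicator (fun _ => (1:ℝ)) v))) := fun x A hA => by
    obtain ⟨B, hB, hBt⟩ := happrox A hA
    exact ⟨B, hB, hBt⟩
  have hsup1 : ∀ ω, (⨆ A : 𝒜, (empMeas X ω ↑A - (μ ↑A).toReal)) =
      ⨆ k, (FlexSym.emp (fun i => X i ω) (e k) - p k) := by
    intro ω
    refine FlexSym.iSup_subtype_eq_iSup_range hsub he'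
      (fun A => empMeas X ω A - (μ A).toReal) 1 ?_ h𝒜ne ?_
    · intro A hA
      have h1 := (hempIcc ω A).2
      have h2 := (htoReal_mem A).1
      show empMeas X ω A - (μ A).toReal ≤ 1
      linarith
    · intro A hA
      obtain ⟨B, hB, hBt⟩ := happrox A hA
      refine ⟨B, hB, ?_⟩
      have h1 : Tendsto (fun m => empMeas X ω (B m)) atTop (𝓝 (empMeas X ω A)) :=
        FlexSym.tendsto_emp hBt (fun i => X i ω)
      have h2 := FlexSym.tendsto_toReal μ (h𝒜meas A hA) (fun m => h𝒜meas _ (hsub (hB m))) hBt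
      exact h1.sub h2
  have hsup2 : ∀ ω, (⨆ A : 𝒜, ((μ ↑A).toReal - empMeas X ω ↑A)) =
      ⨆ k, (p k - FlexSym.emp (fun i => X i ω) (e k)) := by
    intro ω
    refine FlexSym.iSup_subtype_eq_iSup_range hsub he'
      (fun A => (μ A).toReal - empMeas X ω A) 1 ?_ h𝒜ne ?_
    · intro A hA
      have h1 := (hempIcc ω A).1
      have h2 := (htoReal_mem A).2
      show (μ A).toReal - empMeas X ω A ≤ 1
      linarith
    · intro A hA
      obtain ⟨B, hB, hBt⟩ := happrox A hA
      refine ⟨B, hB, ?_⟩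
      have h1 : Tendsto (fun m => empMeas X ω (B m)) atTop (𝓝 (empMeas X ω A)) :=
        FlexSym.tendsto_emp hBt (fun i => X i ω)
      have h2 := FlexSym.tendsto_toReal μ (h𝒜meas A hA) (fun m => h𝒜meas _ (hsub (hB m))) hBt
      exact h2.sub h1
  have hsup3 : ∀ ω, (⨆ A : 𝒜, (empMeas X ω ↑A - empMeas X' ω ↑A)) =
      ⨆ k, (FlexSym.emp (fun i => X i ω) (e k) - FlexSym.emp (fun i => X' i ω) (e k)) := by
    intro ω
    refine FlexSym.iSup_subtype_eq_iSup_range hsub he'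
      (fun A => empMeas X ω A - empMeas X' ω A) 1 ?_ h𝒜ne ?_
    · intro A hA
      have h1 := (hempIcc ω A).2
      have h2 := (hempIcc' ω A).1
      show empMeas X ω A - empMeas X' ω A ≤ 1
      linarith
    · intro A hA
      obtain ⟨B, hB, hBt⟩ := happrox A hA
      refine ⟨B, hB, ?_⟩
      have h1 : Tendsto (fun m => empMeas X ω (B m)) atTop (𝓝 (empMeas X ω A)) :=
        FlexSym.tendsto_emp hBt (fun i => X i ω)
      have h2 : Tendsto (fun m => empMeas X' ω (B m)) atTop (𝓝 (empMeas X' ω A)) :=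
        FlexSym.tendsto_emp hBt (fun i => X' i ω)
      exact h1.sub h2
  -- identification of the events on Ω with events on the canonical spaces
  have hE1meas : MeasurableSet {x : Fin n → Fin d → ℝ | t ≤ ⨆ k, (FlexSym.emp x (e k) - p k)} := by
    refine FlexSym.measurableSet_le_iSup _ 1 ?_
      (fun k => (FlexSym.measurable_emp (hekm k)).sub_const _) t
    intro k x
    have h1 := (FlexSym.emp_mem_Icc hn x (e k)).2
    have h2 := (htoReal_mem (e k)).1
    simp only [hp]
    linarith
  have hE2meas : MeasurableSet {x : Fin n → Fin d → ℝ | t ≤ ⨆ k, (p k - FlexSym.emp x (e k))} := by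
    refine FlexSym.measurableSet_le_iSup _ 1 ?_
      (fun k => measurable_const.sub (FlexSym.measurable_emp (hekm k))) t
    intro k x
    have h1 := (FlexSym.emp_mem_Icc hn x (e k)).1
    have h2 := (htoReal_mem (e k)).2
    show (μ (e k)).toReal - FlexSym.emp x (e k) ≤ 1
    linarith
  have hPE1 : P {ω | t ≤ ⨆ A : 𝒜, (empMeas X ω ↑A - (μ ↑A).toReal)} =
      ν {x | t ≤ ⨆ k, (FlexSym.emp x (e k) - p k)} := by
    have hEv : {ω | t ≤ ⨆ A : 𝒜, (empMeas X ω ↑A - (μ ↑A).toReal)} =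
        (fun ω (i : Fin n) => X i ω) ⁻¹' {x | t ≤ ⨆ k, (FlexSym.emp x (e k) - p k)} := by
      ext ω
      simp only [Set.mem_setOf_eq, Set.mem_preimage]
      rw [hsup1 ω]
    rw [hEv, ← Measure.map_apply hYXmeas hE1meas, hlawX]
  have hPE2 : P {ω | t ≤ ⨆ A : 𝒜, ((μ ↑A).toReal - empMeas X ω ↑A)} =
      ν {x | t ≤ ⨆ k, (p k - FlexSym.emp x (e k))} := by
    have hEv : {ω | t ≤ ⨆ A : 𝒜, ((μ ↑A).toReal - empMeas X ω ↑A)} =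
        (fun ω (i : Fin n) => X i ω) ⁻¹' {x | t ≤ ⨆ k, (p k - FlexSym.emp x (e k))} := by
      ext ω
      simp only [Set.mem_setOf_eq, Set.mem_preimage]
      rw [hsup2 ω]
    rw [hEv, ← Measure.map_apply hYXmeas hE2meas, hlawX]
  have hPRHS : P {ω | a * t ≤ ⨆ A : 𝒜, (empMeas X ω ↑A - empMeas X' ω ↑A)} = (ν.prod ν) S₀ := by
    have hEv : {ω | a * t ≤ ⨆ A : 𝒜, (empMeas X ω ↑A - empMeas X' ω ↑A)} = Z ⁻¹' S₀ := by
      ext ω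
      simp only [Set.mem_setOf_eq, Set.mem_preimage, hS₀def, hg0]
      rw [hsup3 ω]
    rw [hEv, ← Measure.map_apply hZmeas hS₀meas, hmapZ]
  constructor
  · rw [hPE1, hPRHS]
    exact hlim1
  · rw [hPE2, hPRHS]
    exact hlim2
end
end

section
/- Symmetrization under rare events: suppose there is a Borel set 𝔸 ⊆ ℝ^d with A ⊆ 𝔸 for every A ∈ 𝒜, and set p := μ(𝔸). Let t > 0 and a ∈ (0,1) be such that (1−a)² n t² ≥ 2p. Then P( sup_{A ∈ 𝒜} |μ_n(A) − μ(A)| ≥ t ) ≤ 4·P( sup_{A ∈ 𝒜} (μ_n(A) − μ_n'(A)) ≥ a t ). -/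
open MeasureTheory ProbabilityTheory Set Filter
open scoped ENNReal NNReal BigOperators Topology

noncomputable section

/-- Empirical frequency of a set `A` on a data vector `v`. -/
def empV {d n : ℕ} (v : Fin n → (Fin d → ℝ)) (A : Set (Fin d → ℝ)) : ℝ :=
  (∑ i : Fin n, A.indicator (fun _ => (1:ℝ)) (v i)) / n

lemma indicator_one_mem_Icc {d : ℕ} (A : Set (Fin d → ℝ)) (x : Fin d → ℝ) :
    A.indicator (fun _ => (1:ℝ)) x ∈ Set.Icc (0:ℝ) 1 := by
  by_cases hx : x ∈ A <;> simp [Set.indicator_apply, hx]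

lemma empV_mem_Icc {d n : ℕ} (hn : 0 < n) (v : Fin n → (Fin d → ℝ)) (A : Set (Fin d → ℝ)) :
    empV v A ∈ Set.Icc (0:ℝ) 1 := by
  have hnn : (0:ℝ) < n := by exact_mod_cast hn
  unfold empV
  constructor
  · apply div_nonneg _ hnn.le
    exact Finset.sum_nonneg fun i _ => (indicator_one_mem_Icc A (v i)).1
  · rw [div_le_one hnn]
    calc (∑ i : Fin n, A.indicator (fun _ => (1:ℝ)) (v i)) ≤ ∑ _i : Fin n, (1:ℝ) :=
          Finset.sum_le_sum fun i _ => (indicator_one_mem_Icc A (v i)).2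
      _ = n := by simp

lemma measurable_empV {d n : ℕ} {A : Set (Fin d → ℝ)} (hA : MeasurableSet A) :
    Measurable (fun v : Fin n → (Fin d → ℝ) => empV v A) := by
  apply Measurable.div_const
  apply Finset.measurable_sum
  intro i _
  exact ((measurable_const.indicator hA)).comp (measurable_pi_apply i)

lemma toReal_mu_le_one {d : ℕ} (μ : Measure (Fin d → ℝ)) [IsProbabilityMeasure μ]
    (A : Set (Fin d → ℝ)) : (μ A).toReal ≤ 1 := by
  have : μ A ≤ 1 := prob_le_one
  exact ENNReal.toReal_le_of_le_ofReal zero_le_one (by simpa using this)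

/-- Chebyshev bound for empirical frequencies. -/
lemma cheb_emp {Ω : Type*} [MeasurableSpace Ω] (P : Measure Ω) [IsProbabilityMeasure P]
    {d n : ℕ} (hn : 0 < n) (μ : Measure (Fin d → ℝ)) [IsProbabilityMeasure μ]
    (Y : Fin n → Ω → (Fin d → ℝ)) (hmeas : ∀ i, Measurable (Y i))
    (hlaw : ∀ i, Measure.map (Y i) P = μ)
    (hpind : ∀ i j, i ≠ j → IndepFun (Y i) (Y j) P)
    (A : Set (Fin d → ℝ)) (hA : MeasurableSet A)
    (c : ℝ) (hc : 0 < c) :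
    P {ω | c ≤ |empV (fun i => Y i ω) A - (μ A).toReal|} ≤
      ENNReal.ofReal ((μ A).toReal / (n * c ^ 2)) := by
  set q : ℝ := (μ A).toReal with hq
  have hindmeas : Measurable (A.indicator (fun _ => (1:ℝ))) := measurable_const.indicator hA
  set Z : Fin n → Ω → ℝ := fun i ω => A.indicator (fun _ => (1:ℝ)) (Y i ω) with hZ
  have hZmeas : ∀ i, Measurable (Z i) := fun i => hindmeas.comp (hmeas i)
  have hZℒ2 : ∀ i, MemLp (Z i) 2 P := fun i =>
    memLp_of_bounded (Filter.Eventually.of_forall fun ω => indicator_one_mem_Icc A (Y i ω))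
      (hZmeas i).aestronglyMeasurable 2
  have hZint : ∀ i, Integrable (Z i) P := fun i => (hZℒ2 i).integrable one_le_two
  have hZmean : ∀ i, P[Z i] = q := by
    intro i
    have : P[Z i] = ∫ x, A.indicator (fun _ => (1:ℝ)) x ∂(Measure.map (Y i) P) :=
      (integral_map (hmeas i).aemeasurable hindmeas.aestronglyMeasurable).symm
    rw [this, hlaw i]
    exact integral_indicator_one (μ := μ) hA
  have hZsq : ∀ i, (Z i) ^ 2 = Z i := by
    intro i; funext ω
    by_cases h : Y i ω ∈ A <;> simp [hZ, Set.indicator_apply, h]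
  have hZvar : ∀ i, variance (Z i) P ≤ q := by
    intro i
    rw [variance_eq_sub (hZℒ2 i), hZsq i, hZmean i]
    nlinarith [sq_nonneg q]
  -- the sum
  set S : Ω → ℝ := ∑ i : Fin n, Z i with hS
  have hSℒ2 : MemLp S 2 P := memLp_finsetSum' _ fun i _ => hZℒ2 i
  have hSvar : variance S P ≤ n * q := by
    rw [IndepFun.variance_sum (fun i _ => hZℒ2 i)
      (fun i _ j _ hij => ((hpind i j hij).comp hindmeas hindmeas))]
    calc ∑ i : Fin n, variance (Z i) P ≤ ∑ _i : Fin n, q :=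
          Finset.sum_le_sum fun i _ => hZvar i
      _ = n * q := by simp [mul_comm]
  have hSmean : P[S] = n * q := by
    have : P[S] = ∫ ω, (∑ i : Fin n, Z i ω) ∂P := by
      congr 1; funext ω; simp [hS]
    rw [this, integral_finset_sum _ fun i _ => hZint i]
    simp [hZmean, mul_comm]
  -- the normalized sum
  set T : Ω → ℝ := fun ω => (n:ℝ)⁻¹ • S ω with hT
  have hTℒ2 : MemLp T 2 P := hSℒ2.const_smul ((n:ℝ)⁻¹)
  have hnpos : (0:ℝ) < n := by exact_mod_cast hn
  have hTmean : P[T] = q := by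
    rw [hT, integral_smul]
    simp only [smul_eq_mul, hSmean]
    field_simp
  have hTvar : variance T P ≤ q / n := by
    have : variance T P = ((n:ℝ)⁻¹) ^ 2 * variance S P := by
      rw [hT]; exact variance_smul _ _ _
    rw [this]
    calc ((n:ℝ)⁻¹) ^ 2 * variance S P ≤ ((n:ℝ)⁻¹) ^ 2 * (n * q) := by
          apply mul_le_mul_of_nonneg_left hSvar (by positivity)
      _ = q / n := by field_simp
  have hcheb := meas_ge_le_variance_div_sq (μ := P) hTℒ2 hc
  have hsetEq : {ω | c ≤ |empV (fun i => Y i ω) A - q|} = {ω | c ≤ |T ω - P[T]|} := by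
    ext ω
    have : empV (fun i => Y i ω) A = T ω := by
      simp only [hT, empV, hS, smul_eq_mul]
      rw [div_eq_inv_mul]
      simp [hZ]
    rw [Set.mem_setOf_eq, Set.mem_setOf_eq, this, hTmean]
  rw [hsetEq]
  refine hcheb.trans (ENNReal.ofReal_le_ofReal ?_)
  rw [div_le_div_iff₀ (by positivity) (by positivity)] at *
  calc variance T P * (n * c ^ 2) ≤ (q / n) * (n * c ^ 2) := by
        apply mul_le_mul_of_nonneg_right hTvar (by positivity)
    _ = q * c ^ 2 := by field_simp

/-- **Symmetrization under rare events.** If all sets of `𝒜` are contained in a set `𝔸`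
with `p = μ(𝔸)`, `t > 0`, `a ∈ (0,1)` and `(1−a)² n t² ≥ 2p`, then
`P(sup_{A ∈ 𝒜} |μ_n(A) − μ(A)| ≥ t) ≤ 4 P(sup_{A ∈ 𝒜} (μ_n(A) − μ_n'(A)) ≥ a t)`. -/
theorem symmetrization_rare_events
    {Ω : Type*} [MeasurableSpace Ω] (P : Measure Ω) [IsProbabilityMeasure P]
    {d n : ℕ} (hn : 0 < n)
    (μ : Measure (Fin d → ℝ)) [IsProbabilityMeasure μ]
    (X X' : Fin n → Ω → (Fin d → ℝ))
    (hXmeas : ∀ i, Measurable (X i)) (hX'meas : ∀ i, Measurable (X' i))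
    (hXlaw : ∀ i, Measure.map (X i) P = μ)
    (hX'law : ∀ i, Measure.map (X' i) P = μ)
    (hindep : iIndepFun (Sum.elim X X') P)
    (𝒜 : Set (Set (Fin d → ℝ))) (h𝒜ne : 𝒜.Nonempty)
    (h𝒜meas : ∀ A ∈ 𝒜, MeasurableSet A) (h𝒜pm : PointwiseMeasurable 𝒜)
    (𝔸 : Set (Fin d → ℝ)) (h𝔸meas : MeasurableSet 𝔸) (h𝔸 : ∀ A ∈ 𝒜, A ⊆ 𝔸)
    (p : ℝ) (hp : p = (μ 𝔸).toReal)
    (t a : ℝ) (ht : 0 < t) (ha : a ∈ Set.Ioo (0:ℝ) 1)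
    (hcond : 2 * p ≤ (1 - a) ^ 2 * n * t ^ 2) :
    P {ω | t ≤ ⨆ A : 𝒜, |empMeas X ω ↑A - (μ ↑A).toReal|} ≤
      4 * P {ω | a * t ≤ ⨆ A : 𝒜, (empMeas X ω ↑A - empMeas X' ω ↑A)} := by
  classical
  obtain ⟨ha0, ha1⟩ := ha
  have hT1 : (0:ℝ) < 1 - a := by linarith
  have hc0 : (0:ℝ) < (1 - a) * t := by positivity
  -- countable subclass
  obtain ⟨𝒜₀, h₀sub, h₀count, happrox⟩ := h𝒜pm
  obtain ⟨A₀, hA₀⟩ := h𝒜ne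
  obtain ⟨B₀, hB₀mem, -⟩ := happrox A₀ hA₀
  obtain ⟨e, he⟩ := h₀count.exists_eq_range ⟨B₀ 0, hB₀mem 0⟩
  have heA : ∀ k, e k ∈ 𝒜 := fun k => h₀sub (by rw [he]; exact Set.mem_range_self k)
  have heMeas : ∀ k, MeasurableSet (e k) := fun k => h𝒜meas _ (heA k)
  -- data maps
  set Φ : Ω → (Fin n → (Fin d → ℝ)) := fun ω i => X i ω with hΦdef
  set Ψ : Ω → (Fin n → (Fin d → ℝ)) := fun ω i => X' i ω with hΨdef
  have hΦmeas : Measurable Φ := measurable_pi_lambda _ fun i => hXmeas i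
  have hΨmeas : Measurable Ψ := measurable_pi_lambda _ fun i => hX'meas i
  -- basic bounds
  have habs_le : ∀ (v : Fin n → (Fin d → ℝ)) (A : Set (Fin d → ℝ)),
      |empV v A - (μ A).toReal| ≤ 2 := by
    intro v A
    have h1 := empV_mem_Icc hn v A
    have h2 : (0:ℝ) ≤ (μ A).toReal := ENNReal.toReal_nonneg
    have h3 := toReal_mu_le_one μ A
    rw [abs_le]; constructor <;> nlinarith [h1.1, h1.2]
  have hempIcc : ∀ (Y : Fin n → Ω → (Fin d → ℝ)) (ω : Ω) (A : Set (Fin d → ℝ)),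
      empMeas Y ω A ∈ Set.Icc (0:ℝ) 1 := fun Y ω A => empV_mem_Icc hn (fun i => Y i ω) A
  -- reduction of the sup over 𝒜 to the countable family
  have hF_le : ∀ ω, (⨆ A : 𝒜, |empMeas X ω ↑A - (μ ↑A).toReal|) ≤
      ⨆ k, |empV (Φ ω) (e k) - (μ (e k)).toReal| := by
    intro ω
    have hbddk : BddAbove (Set.range fun k => |empV (Φ ω) (e k) - (μ (e k)).toReal|) :=
      ⟨2, by rintro x ⟨k, rfl⟩; exact habs_le _ _⟩
    have hAne : Nonempty (↥𝒜) := ⟨⟨A₀, hA₀⟩⟩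
    refine ciSup_le fun A => ?_
    obtain ⟨B, hBmem, hBconv⟩ := happrox ↑A A.2
    have hempconv : Tendsto (fun m => empV (Φ ω) (B m)) atTop (𝓝 (empV (Φ ω) ↑A)) := by
      have h := tendsto_finset_sum (Finset.univ : Finset (Fin n))
        (fun i _ => hBconv (Φ ω i))
      simpa [empV] using h.div_const (n:ℝ)
    have hBm : ∀ m, MeasurableSet (B m) := fun m => h𝒜meas _ (h₀sub (hBmem m))
    have hAm : MeasurableSet (↑A : Set (Fin d → ℝ)) := h𝒜meas _ A.2
    have hμconv : Tendsto (fun m => (μ (B m)).toReal) atTop (𝓝 ((μ ↑A).toReal)) := by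
      have hint : ∀ m, ∫ x, (B m).indicator (fun _ => (1:ℝ)) x ∂μ = (μ (B m)).toReal :=
        fun m => by exact integral_indicator_one (μ := μ) (hBm m)
      have hintA : ∫ x, (↑A : Set (Fin d → ℝ)).indicator (fun _ => (1:ℝ)) x ∂μ
          = (μ ↑A).toReal := by exact integral_indicator_one (μ := μ) hAm
      have hdct := tendsto_integral_of_dominated_convergence (μ := μ)
        (F := fun m x => (B m).indicator (fun _ => (1:ℝ)) x)
        (f := fun x => (↑A : Set (Fin d → ℝ)).indicator (fun _ => (1:ℝ)) x)
        (fun _ => (1:ℝ))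
        (fun m => (measurable_const.indicator (hBm m)).aestronglyMeasurable)
        (integrable_const 1)
        (fun m => Filter.Eventually.of_forall fun x => by
          rcases indicator_one_mem_Icc (B m) x with ⟨h0, h1⟩
          rw [Real.norm_eq_abs, abs_le]
          exact ⟨by simpa using le_trans (by norm_num : (-1:ℝ) ≤ 0) h0,
            by simpa using h1⟩)
        (Filter.Eventually.of_forall fun x => hBconv x)
      simpa [hint, hintA] using hdct
    have hconv := (hempconv.sub hμconv).abs
    refine le_of_tendsto hconv (Filter.Eventually.of_forall fun m => ?_)
    obtain ⟨k, hk⟩ : ∃ k, e k = B m := by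
      have hmem : B m ∈ Set.range e := by rw [← he]; exact hBmem m
      exact hmem
    rw [← hk]
    exact le_ciSup hbddk k
  -- joint laws
  have hindep' := (iIndepFun_iff_measure_inter_preimage_eq_mul.mp hindep)
  have hmapΦ : Measure.map Φ P = Measure.pi (fun _ : Fin n => μ) := by
    refine (Measure.pi_eq fun s hs => ?_).symm
    rw [Measure.map_apply hΦmeas (MeasurableSet.univ_pi hs)]
    have hsets2 : ∀ i, i ∈ Finset.univ.map (⟨Sum.inl, Sum.inl_injective⟩ : Fin n ↪ (Fin n ⊕ Fin n)) →
        MeasurableSet ((Sum.elim s fun _ => (Set.univ : Set (Fin d → ℝ))) i) := by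
      rintro (j | j) _
      · exact hs j
      · exact MeasurableSet.univ
    have h1 : Φ ⁻¹' (Set.pi Set.univ s)
        = ⋂ i ∈ Finset.univ.map (⟨Sum.inl, Sum.inl_injective⟩ : Fin n ↪ (Fin n ⊕ Fin n)),
            Sum.elim X X' i ⁻¹' (Sum.elim s fun _ => (Set.univ : Set (Fin d → ℝ))) i := by
      ext ω
      constructor
      · intro hω
        rw [Set.mem_iInter₂]
        rintro i hi
        simp only [Finset.mem_map, Finset.mem_univ, true_and,
          Function.Embedding.coeFn_mk] at hi
        obtain ⟨j, rfl⟩ := hi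
        simp only [Sum.elim_inl, Set.mem_preimage]
        exact hω j (Set.mem_univ j)
      · intro hω
        rw [Set.mem_iInter₂] at hω
        intro j _
        have h2 := hω (Sum.inl j) (by simp)
        simpa using h2
    rw [h1, hindep' (Finset.univ.map (⟨Sum.inl, Sum.inl_injective⟩ : Fin n ↪ (Fin n ⊕ Fin n))) hsets2, Finset.prod_map]
    refine Finset.prod_congr rfl fun j _ => ?_
    simp only [Function.Embedding.coeFn_mk, Sum.elim_inl]
    rw [← hXlaw j, Measure.map_apply (hXmeas j) (hs j)]
  have hmapΨ : Measure.map Ψ P = Measure.pi (fun _ : Fin n => μ) := by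
    refine (Measure.pi_eq fun s hs => ?_).symm
    rw [Measure.map_apply hΨmeas (MeasurableSet.univ_pi hs)]
    have hsets2 : ∀ i, i ∈ Finset.univ.map (⟨Sum.inr, Sum.inr_injective⟩ : Fin n ↪ (Fin n ⊕ Fin n)) →
        MeasurableSet ((Sum.elim (fun _ => (Set.univ : Set (Fin d → ℝ))) s) i) := by
      rintro (j | j) _
      · exact MeasurableSet.univ
      · exact hs j
    have h1 : Ψ ⁻¹' (Set.pi Set.univ s)
        = ⋂ i ∈ Finset.univ.map (⟨Sum.inr, Sum.inr_injective⟩ : Fin n ↪ (Fin n ⊕ Fin n)),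
            Sum.elim X X' i ⁻¹' (Sum.elim (fun _ => (Set.univ : Set (Fin d → ℝ))) s) i := by
      ext ω
      constructor
      · intro hω
        rw [Set.mem_iInter₂]
        rintro i hi
        simp only [Finset.mem_map, Finset.mem_univ, true_and,
          Function.Embedding.coeFn_mk] at hi
        obtain ⟨j, rfl⟩ := hi
        simp only [Sum.elim_inr, Set.mem_preimage]
        exact hω j (Set.mem_univ j)
      · intro hω
        rw [Set.mem_iInter₂] at hω
        intro j _
        have h2 := hω (Sum.inr j) (by simp)
        simpa using h2
    rw [h1, hindep' (Finset.univ.map (⟨Sum.inr, Sum.inr_injective⟩ : Fin n ↪ (Fin n ⊕ Fin n))) hsets2, Finset.prod_map]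
    refine Finset.prod_congr rfl fun j _ => ?_
    simp only [Function.Embedding.coeFn_mk, Sum.elim_inr]
    rw [← hX'law j, Measure.map_apply (hX'meas j) (hs j)]
  -- independence of the two halves
  have hΦΨindep : IndepFun Φ Ψ P := by
    have hmeasAll : ∀ i : Fin n ⊕ Fin n, Measurable (Sum.elim X X' i) := by
      rintro (i | i)
      · exact hXmeas i
      · exact hX'meas i
    have hdisj : Disjoint (Finset.univ.map (⟨Sum.inl, Sum.inl_injective⟩ : Fin n ↪ (Fin n ⊕ Fin n)))
        (Finset.univ.map (⟨Sum.inr, Sum.inr_injective⟩ :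
          Fin n ↪ (Fin n ⊕ Fin n))) := by
      rw [Finset.disjoint_left]
      rintro x hx hx'
      simp only [Finset.mem_map, Finset.mem_univ, true_and,
        Function.Embedding.coeFn_mk] at hx hx'
      obtain ⟨j, rfl⟩ := hx
      obtain ⟨j', hj'⟩ := hx'
      exact Sum.inr_ne_inl hj'
    have h := hindep.indepFun_finset (Finset.univ.map (⟨Sum.inl, Sum.inl_injective⟩ : Fin n ↪ (Fin n ⊕ Fin n)))
      (Finset.univ.map (⟨Sum.inr, Sum.inr_injective⟩ : Fin n ↪ (Fin n ⊕ Fin n))) hdisj hmeasAll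
    have hρS : Measurable (fun v : ((i : (Finset.univ.map (⟨Sum.inl, Sum.inl_injective⟩ :
        Fin n ↪ (Fin n ⊕ Fin n)))) → (Fin d → ℝ)) => fun j : Fin n =>
          v ⟨Sum.inl j, by simp⟩) :=
      measurable_pi_lambda _ fun j => measurable_pi_apply _
    have hρT : Measurable (fun v : ((i : (Finset.univ.map (⟨Sum.inr, Sum.inr_injective⟩ :
        Fin n ↪ (Fin n ⊕ Fin n)))) → (Fin d → ℝ)) => fun j : Fin n =>
          v ⟨Sum.inr j, by simp⟩) :=
      measurable_pi_lambda _ fun j => measurable_pi_apply _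
    exact h.comp hρS hρT
  have hprod : Measure.map (fun ω => (Φ ω, Ψ ω)) P
      = (Measure.pi fun _ : Fin n => μ).prod (Measure.pi fun _ : Fin n => μ) := by
    have h := (indepFun_iff_map_prod_eq_prod_map_map
      hΦmeas.aemeasurable hΨmeas.aemeasurable).mp hΦΨindep
    rw [hmapΦ, hmapΨ] at h
    exact h
  have hswap : ∀ W : Set ((Fin n → (Fin d → ℝ)) × (Fin n → (Fin d → ℝ))),
      MeasurableSet W →
      P ((fun ω => (Φ ω, Ψ ω)) ⁻¹' (Prod.swap ⁻¹' W))
        = P ((fun ω => (Φ ω, Ψ ω)) ⁻¹' W) := by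
    intro W hW
    have hθ : Measurable fun ω => (Φ ω, Ψ ω) := hΦmeas.prodMk hΨmeas
    calc P ((fun ω => (Φ ω, Ψ ω)) ⁻¹' (Prod.swap ⁻¹' W))
        = Measure.map (fun ω => (Φ ω, Ψ ω)) P (Prod.swap ⁻¹' W) :=
          (Measure.map_apply hθ (measurable_swap hW)).symm
      _ = Measure.map Prod.swap ((Measure.pi fun _ : Fin n => μ).prod
            (Measure.pi fun _ : Fin n => μ)) W := by
          rw [hprod, Measure.map_apply measurable_swap hW]
      _ = ((Measure.pi fun _ : Fin n => μ).prod (Measure.pi fun _ : Fin n => μ)) W := by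
          rw [Measure.prod_swap]
      _ = Measure.map (fun ω => (Φ ω, Ψ ω)) P W := by rw [hprod]
      _ = P ((fun ω => (Φ ω, Ψ ω)) ⁻¹' W) := Measure.map_apply hθ hW
  -- bounded sup for the symmetrized differences
  have hGbdd : ∀ ω, BddAbove (Set.range fun A : 𝒜 =>
      empMeas X ω ↑A - empMeas X' ω ↑A) := by
    intro ω
    refine ⟨2, ?_⟩
    rintro x ⟨A, rfl⟩
    have h1 := hempIcc X ω ↑A
    have h2 := hempIcc X' ω ↑A
    simp only [Set.mem_Icc] at h1 h2
    show empMeas X ω ↑A - empMeas X' ω ↑A ≤ 2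
    linarith [h1.1, h1.2, h2.1, h2.2]
  have hgle : ∀ (ω : Ω) (k : ℕ), empV (Φ ω) (e k) - empV (Ψ ω) (e k) ≤
      ⨆ A : 𝒜, (empMeas X ω ↑A - empMeas X' ω ↑A) :=
    fun ω k => le_ciSup (hGbdd ω) (⟨e k, heA k⟩ : 𝒜)
  -- the approximating events
  set U : ℕ → Set Ω := fun m => ⋃ k,
    {ω | a * t - 1 / ((m : ℝ) + 1) < empV (Φ ω) (e k) - empV (Ψ ω) (e k)} with hUdef
  have hUmeas : ∀ m, MeasurableSet (U m) := by
    intro m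
    refine MeasurableSet.iUnion fun k => ?_
    exact measurableSet_lt measurable_const
      (((measurable_empV (heMeas k)).comp hΦmeas).sub
        ((measurable_empV (heMeas k)).comp hΨmeas))
  have hUanti : Antitone U := by
    intro m m' hmm' ω hω
    obtain ⟨k, hk⟩ := Set.mem_iUnion.mp hω
    refine Set.mem_iUnion.mpr ⟨k, ?_⟩
    have hle : 1 / ((m' : ℝ) + 1) ≤ 1 / ((m : ℝ) + 1) := by
      apply one_div_le_one_div_of_le (by positivity)
      have : (m : ℝ) ≤ (m' : ℝ) := by exact_mod_cast hmm'
      linarith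
    have hk' : a * t - 1 / ((m' : ℝ) + 1) < empV (Φ ω) (e k) - empV (Ψ ω) (e k) := hk
    show a * t - 1 / ((m : ℝ) + 1) < empV (Φ ω) (e k) - empV (Ψ ω) (e k)
    linarith
  -- the key bound for each m
  have hkey : ∀ m : ℕ, P {ω | t ≤ ⨆ A : 𝒜, |empMeas X ω ↑A - (μ ↑A).toReal|}
      ≤ 4 * P (U m) := by
    intro m
    set δ : ℝ := 1 / ((m : ℝ) + 1) with hδdef
    have hδpos : 0 < δ := by positivity
    set M : ℕ → Set (Fin n → (Fin d → ℝ)) :=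
      fun k => {v | t - δ < |empV v (e k) - (μ (e k)).toReal|} with hMdef
    have hMmeas : ∀ k, MeasurableSet (M k) := fun k =>
      measurableSet_lt measurable_const
        ((measurable_empV (heMeas k)).sub measurable_const).abs
    have hMdmeas : ∀ k, MeasurableSet (disjointed M k) :=
      MeasurableSet.disjointed hMmeas
    set N : ℕ → Set (Fin n → (Fin d → ℝ)) :=
      fun k => {v | (1 - a) * t < |empV v (e k) - (μ (e k)).toReal|} with hNdef
    have hNmeas : ∀ k, MeasurableSet (N k) := fun k =>
      measurableSet_lt measurable_const
        ((measurable_empV (heMeas k)).sub measurable_const).abs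
    set E : ℕ → Set Ω := fun k => Φ ⁻¹' (disjointed M k) with hEdef
    set C : ℕ → Set Ω := fun k => Ψ ⁻¹' (N k)ᶜ with hCdef
    -- step (i): inclusion of the deviation event
    have hsub1 : {ω | t ≤ ⨆ A : 𝒜, |empMeas X ω ↑A - (μ ↑A).toReal|} ⊆ ⋃ k, E k := by
      intro ω hω
      have h1 : t ≤ ⨆ k, |empV (Φ ω) (e k) - (μ (e k)).toReal| :=
        le_trans hω (hF_le ω)
      have h2 : ∃ k, t - δ < |empV (Φ ω) (e k) - (μ (e k)).toReal| := by
        by_contra hcon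
        push_neg at hcon
        have h3 : (⨆ k, |empV (Φ ω) (e k) - (μ (e k)).toReal|) ≤ t - δ :=
          ciSup_le hcon
        linarith
      obtain ⟨k, hk⟩ := h2
      have h4 : ω ∈ ⋃ k, Φ ⁻¹' (M k) := Set.mem_iUnion.mpr ⟨k, hk⟩
      have h5 : (⋃ k, Φ ⁻¹' (M k)) = ⋃ k, E k := by
        simp only [hEdef, ← Set.preimage_iUnion, iUnion_disjointed]
      rwa [h5] at h4
    -- step (ii): independence factorization
    have hfact : ∀ k, P (E k ∩ C k) = P (E k) * P (C k) := fun k =>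
      hΦΨindep.measure_inter_preimage_eq_mul _ _ (hMdmeas k) (hNmeas k).compl
    -- step (iii): Chebyshev bound on C k
    have hCbound : ∀ k, (2⁻¹ : ℝ≥0∞) ≤ P (C k) := by
      intro k
      have hpind : ∀ i j, i ≠ j → IndepFun (X' i) (X' j) P := fun i j hij =>
        hindep.indepFun (show (Sum.inr i : Fin n ⊕ Fin n) ≠ Sum.inr j by simpa)
      have hcheb := cheb_emp P hn μ X' hX'meas hX'law hpind (e k) (heMeas k)
        ((1 - a) * t) hc0
      have hsubC : (C k)ᶜ ⊆
          {ω | (1 - a) * t ≤ |empV (fun i => X' i ω) (e k) - (μ (e k)).toReal|} := by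
        intro ω hω
        have h1 : Ψ ω ∈ N k := by
          simpa [hCdef] using hω
        exact le_of_lt (show (1 - a) * t < _ from h1)
      have h1 : P ((C k)ᶜ) ≤ ENNReal.ofReal
          ((μ (e k)).toReal / (↑n * ((1 - a) * t) ^ 2)) :=
        (measure_mono hsubC).trans hcheb
      have h2 : (μ (e k)).toReal / (↑n * ((1 - a) * t) ^ 2) ≤ 2⁻¹ := by
        have hqp : (μ (e k)).toReal ≤ p := by
          rw [hp]
          exact ENNReal.toReal_mono (measure_ne_top μ 𝔸)
            (measure_mono (h𝔸 _ (heA k)))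
        have hn1 : (1:ℝ) ≤ (n:ℝ) := by exact_mod_cast hn
        have hden : (0:ℝ) < ↑n * ((1 - a) * t) ^ 2 := by positivity
        rw [div_le_iff₀ hden]
        nlinarith [hcond, hqp]
      have h3 : P ((C k)ᶜ) ≤ 2⁻¹ := by
        refine h1.trans ?_
        calc ENNReal.ofReal ((μ (e k)).toReal / (↑n * ((1 - a) * t) ^ 2))
            ≤ ENNReal.ofReal 2⁻¹ := ENNReal.ofReal_le_ofReal h2
          _ = 2⁻¹ := by
              rw [ENNReal.ofReal_inv_of_pos two_pos]
              norm_num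
      have hCmeas : MeasurableSet (C k) := hΨmeas (hNmeas k).compl
      have h4 : P (C k) = 1 - P ((C k)ᶜ) := by
        have := prob_compl_eq_one_sub (μ := P) hCmeas.compl
        rwa [compl_compl] at this
      rw [h4]
      calc (2⁻¹ : ℝ≥0∞) = 1 - 2⁻¹ := ENNReal.one_sub_inv_two.symm
        _ ≤ 1 - P ((C k)ᶜ) := tsub_le_tsub_left h3 1
    -- step (iv): P (E k) ≤ 2 * P (E k ∩ C k)
    have hE2 : ∀ k, P (E k) ≤ 2 * P (E k ∩ C k) := by
      intro k
      have h1 : P (E k) * 2⁻¹ ≤ P (E k) * P (C k) := mul_le_mul_right (hCbound k) _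
      rw [← hfact k] at h1
      have h2inv : (2 : ℝ≥0∞) * 2⁻¹ = 1 :=
        ENNReal.mul_inv_cancel (by norm_num) (by norm_num)
      calc P (E k) = 2 * 2⁻¹ * P (E k) := by rw [h2inv, one_mul]
        _ = 2 * (P (E k) * 2⁻¹) := by ring
        _ ≤ 2 * P (E k ∩ C k) := mul_le_mul_right h1 2
    -- step (v): inclusion into the symmetrized events
    set W : Set ((Fin n → (Fin d → ℝ)) × (Fin n → (Fin d → ℝ))) := ⋃ k,
      {uv | a * t - δ < empV uv.1 (e k) - empV uv.2 (e k)} with hWdef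
    have hWmeas : MeasurableSet W := by
      refine MeasurableSet.iUnion fun k => ?_
      exact measurableSet_lt measurable_const
        (((measurable_empV (heMeas k)).comp measurable_fst).sub
          ((measurable_empV (heMeas k)).comp measurable_snd))
    have hUm : (fun ω => (Φ ω, Ψ ω)) ⁻¹' W = U m := by
      rw [hWdef, Set.preimage_iUnion]
      rfl
    have hICD : ∀ k, E k ∩ C k ⊆
        (fun ω => (Φ ω, Ψ ω)) ⁻¹' W ∪ (fun ω => (Φ ω, Ψ ω)) ⁻¹' (Prod.swap ⁻¹' W) := by
      intro k ω hω
      obtain ⟨hE, hC⟩ := hω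
      have hM' : Φ ω ∈ M k := disjointed_subset M k hE
      have h1 : t - δ < |empV (Φ ω) (e k) - (μ (e k)).toReal| := hM'
      have h2 : |empV (Ψ ω) (e k) - (μ (e k)).toReal| ≤ (1 - a) * t := by
        have : Ψ ω ∈ (N k)ᶜ := hC
        simpa [hNdef] using this
      have habs : |empV (Φ ω) (e k) - (μ (e k)).toReal|
          - |empV (Ψ ω) (e k) - (μ (e k)).toReal|
          ≤ |empV (Φ ω) (e k) - empV (Ψ ω) (e k)| := by
        have h := abs_sub_abs_le_abs_sub (empV (Φ ω) (e k) - (μ (e k)).toReal)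
          (empV (Ψ ω) (e k) - (μ (e k)).toReal)
        have heq : (empV (Φ ω) (e k) - (μ (e k)).toReal)
            - (empV (Ψ ω) (e k) - (μ (e k)).toReal)
            = empV (Φ ω) (e k) - empV (Ψ ω) (e k) := by ring
        rwa [heq] at h
      have h3 : a * t - δ < |empV (Φ ω) (e k) - empV (Ψ ω) (e k)| := by linarith
      rcases lt_abs.mp h3 with h4 | h4
      · left
        exact Set.mem_iUnion.mpr ⟨k, h4⟩
      · right
        refine Set.mem_iUnion.mpr ⟨k, ?_⟩
        show a * t - δ < empV (Ψ ω) (e k) - empV (Φ ω) (e k)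
        linarith [h4]
    -- assembling
    have hEmeasΩ : ∀ k, MeasurableSet (E k) := fun k => hΦmeas (hMdmeas k)
    have hCmeasΩ : ∀ k, MeasurableSet (C k) := fun k => hΨmeas (hNmeas k).compl
    have hECmeas : ∀ k, MeasurableSet (E k ∩ C k) := fun k =>
      (hEmeasΩ k).inter (hCmeasΩ k)
    have hEdisj : Pairwise (Function.onFun Disjoint E) := fun i j hij =>
      (disjoint_disjointed M hij).preimage Φ
    have hECdisj : Pairwise (Function.onFun Disjoint fun k => E k ∩ C k) := fun i j hij =>
      ((hEdisj hij).mono Set.inter_subset_left Set.inter_subset_left)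
    calc P {ω | t ≤ ⨆ A : 𝒜, |empMeas X ω ↑A - (μ ↑A).toReal|}
        ≤ P (⋃ k, E k) := measure_mono hsub1
      _ = ∑' k, P (E k) := measure_iUnion hEdisj hEmeasΩ
      _ ≤ ∑' k, 2 * P (E k ∩ C k) := ENNReal.tsum_le_tsum hE2
      _ = 2 * ∑' k, P (E k ∩ C k) := ENNReal.tsum_mul_left
      _ = 2 * P (⋃ k, E k ∩ C k) := by rw [measure_iUnion hECdisj hECmeas]
      _ ≤ 2 * P ((fun ω => (Φ ω, Ψ ω)) ⁻¹' W
            ∪ (fun ω => (Φ ω, Ψ ω)) ⁻¹' (Prod.swap ⁻¹' W)) :=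
          mul_le_mul_right (measure_mono (Set.iUnion_subset hICD)) 2
      _ ≤ 2 * (P ((fun ω => (Φ ω, Ψ ω)) ⁻¹' W)
            + P ((fun ω => (Φ ω, Ψ ω)) ⁻¹' (Prod.swap ⁻¹' W))) :=
          mul_le_mul_right (measure_union_le _ _) 2
      _ = 2 * (P ((fun ω => (Φ ω, Ψ ω)) ⁻¹' W) + P ((fun ω => (Φ ω, Ψ ω)) ⁻¹' W)) := by
          rw [hswap W hWmeas]
      _ = 4 * P ((fun ω => (Φ ω, Ψ ω)) ⁻¹' W) := by ring
      _ = 4 * P (U m) := by rw [hUm]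
  -- passing to the limit
  have hInt : (⋂ m, U m) ⊆
      {ω | a * t ≤ ⨆ A : 𝒜, (empMeas X ω ↑A - empMeas X' ω ↑A)} := by
    intro ω hω
    have h1 : ∀ m : ℕ, a * t - 1 / ((m : ℝ) + 1)
        ≤ ⨆ A : 𝒜, (empMeas X ω ↑A - empMeas X' ω ↑A) := by
      intro m
      obtain ⟨k, hk⟩ := Set.mem_iUnion.mp (Set.mem_iInter.mp hω m)
      exact le_trans (le_of_lt hk) (hgle ω k)
    have hlim : Tendsto (fun m : ℕ => a * t - 1 / ((m : ℝ) + 1)) atTop (𝓝 (a * t)) := by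
      have h := tendsto_one_div_add_atTop_nhds_zero_nat (𝕜 := ℝ)
      simpa using tendsto_const_nhds.sub h
    exact le_of_tendsto hlim (Filter.Eventually.of_forall h1)
  have hmono : Tendsto (fun m => P (U m)) atTop (𝓝 (P (⋂ m, U m))) :=
    tendsto_measure_iInter_atTop (fun m => (hUmeas m).nullMeasurableSet) hUanti
      ⟨0, measure_ne_top P _⟩
  have h4t : Tendsto (fun m => 4 * P (U m)) atTop (𝓝 (4 * P (⋂ m, U m))) :=
    ENNReal.Tendsto.const_mul hmono (Or.inr (by norm_num))
  have hfin : P {ω | t ≤ ⨆ A : 𝒜, |empMeas X ω ↑A - (μ ↑A).toReal|}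
      ≤ 4 * P (⋂ m, U m) :=
    ge_of_tendsto h4t (Filter.Eventually.of_forall hkey)
  exact hfin.trans (mul_le_mul_right (measure_mono hInt) 4)
end
end

section
/- Conditioning trick: let K := Σ_{i=1}^n 1{X_i ∈ 𝔸}, which has the binomial distribution Bin(n,p). For every k ∈ {0,1,…,n} with P(K = k) > 0 and every finite collection A_1,…,A_m ∈ 𝒜, the conditional distribution of the vector (μ_n(A_1),…,μ_n(A_m)) given the event {K = k} equals the distribution of ((k/n)·μ_k^Y(A_1),…,(k/n)·μ_k^Y(A_m)). In particular, under pointwise measurability of 𝒜, the conditional distribution of sup_{A ∈ 𝒜} |μ_n(A) − μ(A)| given {K = k} equals the distribution of sup_{A ∈ 𝒜} |(k/n)·μ_k^Y(A) − μ(A)|. -/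
open MeasureTheory ProbabilityTheory Set Filter
open scoped ENNReal NNReal BigOperators Topology

noncomputable section

open Classical in
/-- The number of sample points falling in `𝔸`. -/
def rareCount {Ω : Type*} {d n : ℕ} (X : Fin n → Ω → (Fin d → ℝ))
    (𝔸 : Set (Fin d → ℝ)) (ω : Ω) : ℕ :=
  (Finset.univ.filter fun i => X i ω ∈ 𝔸).card

open Classical in
/-- The empirical measure `μ_k^Y(A)` of the first `k` variables of the sample
`Y_1, …, Y_n` (equal to `0` when `k = 0`). -/
def empMeasFirst {Ω : Type*} {d n : ℕ} (Y : Fin n → Ω → (Fin d → ℝ)) (k : ℕ) (ω : Ω)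
    (A : Set (Fin d → ℝ)) : ℝ :=
  (∑ i : Fin n, if (i : ℕ) < k ∧ Y i ω ∈ A then (1:ℝ) else 0) / k

lemma aux_map_comp_pi {ι κ E : Type*} [Fintype ι] [Fintype κ] [MeasurableSpace E]
    (ν : ι → Measure E) [∀ i, IsProbabilityMeasure (ν i)] (s : κ → ι)
    (hs : Function.Injective s) :
    Measure.map (fun z (j : κ) => z (s j)) (Measure.pi ν) = Measure.pi (fun j => ν (s j)) := by
  classical
  refine (Measure.pi_eq fun t ht => ?_).symm
  rw [Measure.map_apply (f := fun (z : ι → E) (j : κ) => z (s j))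
    (measurable_pi_lambda _ fun j => measurable_pi_apply _) (MeasurableSet.univ_pi ht)]
  have hpre : (fun (z : ι → E) (j : κ) => z (s j)) ⁻¹' (Set.pi Set.univ t)
      = Set.pi Set.univ (fun i => ⋂ j ∈ Finset.univ.filter (fun j => s j = i), t j) := by
    ext z
    simp only [Set.mem_preimage, Set.mem_pi, Set.mem_univ, forall_true_left, Set.mem_iInter,
      Finset.mem_filter, Finset.mem_univ, true_and, true_implies]
    constructor
    · rintro hz i j rfl; exact hz j
    · intro hz j; exact hz (s j) j rfl
  rw [hpre, Measure.pi_pi]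
  have h1 : ∀ j : κ, (⋂ j' ∈ Finset.univ.filter (fun j' => s j' = s j), t j') = t j := by
    intro j
    have : Finset.univ.filter (fun j' => s j' = s j) = {j} := by
      ext j'; simp [hs.eq_iff]
    rw [this]; simp
  have h2 : ∀ i, i ∉ Finset.univ.image s →
      (ν i) (⋂ j ∈ Finset.univ.filter (fun j => s j = i), t j) = 1 := by
    intro i hi
    have : Finset.univ.filter (fun j => s j = i) = ∅ := by
      ext j; simp only [Finset.mem_filter, Finset.mem_univ, true_and, Finset.notMem_empty,
        iff_false]
      intro h; exact hi (Finset.mem_image.2 ⟨j, Finset.mem_univ j, h⟩)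
    rw [this]; simp
  calc ∏ i : ι, (ν i) (⋂ j ∈ Finset.univ.filter (fun j => s j = i), t j)
      = ∏ i ∈ Finset.univ.image s, (ν i) (⋂ j ∈ Finset.univ.filter (fun j => s j = i), t j) := by
        refine (Finset.prod_subset (Finset.subset_univ _) fun i _ hi => h2 i hi).symm
    _ = ∏ j : κ, (ν (s j)) (⋂ j' ∈ Finset.univ.filter (fun j' => s j' = s j), t j') :=
        Finset.prod_image (fun x _ y _ h => hs h)
    _ = ∏ j : κ, (ν (s j)) (t j) := Finset.prod_congr rfl fun j _ => by rw [h1 j]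

lemma aux_iIndepFun_map_pi {Ω ι : Type*} [MeasurableSpace Ω] [Fintype ι] {E : Type*}
    [mE : MeasurableSpace E] (P : Measure Ω) [IsProbabilityMeasure P]
    (f : ι → Ω → E) (hm : ∀ i, Measurable (f i))
    (h : iIndepFun f P) :
    Measure.map (fun ω i => f i ω) P = Measure.pi (fun i => Measure.map (f i) P) := by
  haveI : ∀ i, IsProbabilityMeasure (Measure.map (f i) P) :=
    fun i => Measure.isProbabilityMeasure_map (hm i).aemeasurable
  refine (Measure.pi_eq fun s hs => ?_).symm
  rw [Measure.map_apply (f := fun (ω : Ω) (i : ι) => f i ω)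
    (measurable_pi_lambda _ fun i => hm i) (MeasurableSet.univ_pi hs)]
  have hpre : (fun (ω : Ω) (i : ι) => f i ω) ⁻¹' (Set.pi Set.univ s)
      = ⋂ i ∈ Finset.univ, f i ⁻¹' s i := by
    ext ω; simp [Set.mem_pi]
  rw [hpre, h.measure_inter_preimage_eq_mul Finset.univ (fun i _ => hs i)]
  exact Finset.prod_congr rfl fun i _ => (Measure.map_apply (hm i) (hs i)).symm

lemma aux_pi_inter_box {E : Type*} [MeasurableSpace E] {k : ℕ} (μ ν : Measure E)
    [IsProbabilityMeasure μ] [IsProbabilityMeasure ν] {𝔸 : Set E} (h𝔸 : MeasurableSet 𝔸)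
    (hν : μ.restrict 𝔸 = μ 𝔸 • ν) (C : Set (Fin k → E)) (hC : MeasurableSet C) :
    Measure.pi (fun _ : Fin k => μ) (C ∩ Set.pi Set.univ (fun _ => 𝔸))
      = (μ 𝔸)^k * Measure.pi (fun _ : Fin k => ν) C := by
  have h1 : Measure.pi (fun _ : Fin k => μ.restrict 𝔸)
      = (Measure.pi fun _ : Fin k => μ).restrict (Set.pi Set.univ fun _ => 𝔸) := by
    refine Measure.pi_eq fun t ht => ?_
    rw [Measure.restrict_apply (MeasurableSet.univ_pi ht), ← Set.pi_inter_distrib,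
      Measure.pi_pi]
    exact Finset.prod_congr rfl fun i _ => (Measure.restrict_apply (ht i)).symm
  have h2 : Measure.pi (fun _ : Fin k => μ.restrict 𝔸)
      = (μ 𝔸)^k • Measure.pi (fun _ : Fin k => ν) := by
    refine Measure.pi_eq (μ := fun _ : Fin k => μ.restrict 𝔸) fun t ht => ?_
    rw [Measure.smul_apply, Measure.pi_pi, smul_eq_mul]
    simp only [hν, Measure.smul_apply, smul_eq_mul]
    rw [Finset.prod_mul_distrib, Finset.prod_const, Finset.card_univ, Fintype.card_fin]
  rw [← Measure.restrict_apply hC, ← h1, h2, Measure.smul_apply, smul_eq_mul]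

lemma aux_measurable_sup {d : ℕ} (μ : Measure (Fin d → ℝ)) [IsProbabilityMeasure μ]
    (𝒜 : Set (Set (Fin d → ℝ))) (h𝒜ne : 𝒜.Nonempty)
    (h𝒜meas : ∀ A ∈ 𝒜, MeasurableSet A) (h𝒜pm : PointwiseMeasurable 𝒜)
    {ι : Type*} [Fintype ι] (c : ℝ) :
    Measurable (fun (y : ι → (Fin d → ℝ)) =>
      ⨆ A : 𝒜, |(∑ i : ι, (A : Set (Fin d → ℝ)).indicator (fun _ => (1:ℝ)) (y i))/c
        - (μ (A : Set (Fin d → ℝ))).toReal|) := by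
  classical
  obtain ⟨𝒜₀, h₀sub, h₀c, h₀app⟩ := h𝒜pm
  obtain ⟨A₀, hA₀⟩ := h𝒜ne
  obtain ⟨B₀, hB₀, -⟩ := h₀app A₀ hA₀
  obtain ⟨g, hg⟩ := h₀c.exists_eq_range ⟨B₀ 0, hB₀ 0⟩
  set F : Set (Fin d → ℝ) → (ι → (Fin d → ℝ)) → ℝ := fun A y =>
    |(∑ i : ι, A.indicator (fun _ => (1:ℝ)) (y i))/c - (μ A).toReal| with hF
  set M : ℝ := (Fintype.card ι : ℝ)/|c| + 1 with hM
  have hbound : ∀ (A : Set (Fin d → ℝ)) (y : ι → (Fin d → ℝ)), F A y ≤ M := by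
    intro A y
    have hsum0 : (0:ℝ) ≤ ∑ i : ι, A.indicator (fun _ => (1:ℝ)) (y i) :=
      Finset.sum_nonneg fun i _ => Set.indicator_nonneg (fun _ _ => zero_le_one) _
    have hsum1 : (∑ i : ι, A.indicator (fun _ => (1:ℝ)) (y i)) ≤ (Fintype.card ι : ℝ) := by
      calc (∑ i : ι, A.indicator (fun _ => (1:ℝ)) (y i)) ≤ ∑ _i : ι, (1:ℝ) :=
            Finset.sum_le_sum fun i _ => by rw [Set.indicator_apply]; split <;> norm_num
        _ = (Fintype.card ι : ℝ) := by simp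
    have h1 : |(∑ i : ι, A.indicator (fun _ => (1:ℝ)) (y i))/c| ≤ (Fintype.card ι : ℝ)/|c| := by
      rw [abs_div]
      rcases eq_or_ne c 0 with rfl | hc
      · simp
      · exact (div_le_div_iff_of_pos_right (abs_pos.2 hc)).2 (by rwa [abs_of_nonneg hsum0])
    have h2 : |(μ A).toReal| ≤ 1 := by
      rw [abs_of_nonneg ENNReal.toReal_nonneg]
      simpa using ENNReal.toReal_mono ENNReal.one_ne_top prob_le_one
    calc F A y ≤ |(∑ i : ι, A.indicator (fun _ => (1:ℝ)) (y i))/c| + |(μ A).toReal| :=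
          abs_sub _ _
      _ ≤ M := add_le_add h1 h2
  have hFmeas : ∀ A ∈ 𝒜, Measurable (F A) := by
    intro A hA
    apply Measurable.abs
    apply Measurable.sub _ measurable_const
    apply Measurable.div_const
    exact Finset.measurable_sum _ fun i _ =>
      (measurable_const.indicator (h𝒜meas A hA)).comp (measurable_pi_apply i)
  have htendsto : ∀ A ∈ 𝒜, ∀ (B : ℕ → Set (Fin d → ℝ)), (∀ m, B m ∈ 𝒜₀) →
      (∀ x, Filter.Tendsto (fun m => (B m).indicator (fun _ => (1:ℝ)) x)
        Filter.atTop (nhds (A.indicator (fun _ => (1:ℝ)) x))) →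
      ∀ y, Filter.Tendsto (fun m => F (B m) y) Filter.atTop (nhds (F A y)) := by
    intro A hA B hB happ y
    have h1 : Filter.Tendsto (fun m => ∑ i : ι, (B m).indicator (fun _ => (1:ℝ)) (y i))
        Filter.atTop (nhds (∑ i : ι, A.indicator (fun _ => (1:ℝ)) (y i))) :=
      tendsto_finset_sum _ fun i _ => happ (y i)
    have h2 : Filter.Tendsto (fun m => (μ (B m)).toReal) Filter.atTop
        (nhds ((μ A).toReal)) := by
      have hint : ∀ (C : Set (Fin d → ℝ)), MeasurableSet C →
          (∫ x, C.indicator (fun _ => (1:ℝ)) x ∂μ) = (μ C).toReal := by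
        intro C hC
        rw [MeasureTheory.integral_indicator_const _ hC]; simp; rfl
      rw [← hint A (h𝒜meas A hA)]
      have := MeasureTheory.tendsto_integral_of_dominated_convergence
        (μ := μ) (F := fun m => (B m).indicator (fun _ => (1:ℝ)))
        (f := A.indicator (fun _ => (1:ℝ))) (bound := fun _ => (1:ℝ))
        (fun m => ((measurable_const.indicator (h𝒜meas _ (h₀sub (hB m)))).aestronglyMeasurable))
        (MeasureTheory.integrable_const 1)
        (fun m => Filter.Eventually.of_forall fun x => by
          by_cases h : x ∈ B m <;>
            simp [Set.indicator_of_mem, Set.indicator_of_notMem, h])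
        (Filter.Eventually.of_forall fun x => happ x)
      convert this using 2
      exact (hint _ (h𝒜meas _ (h₀sub (hB _)))).symm
    exact ((h1.div_const c).sub h2).abs
  have hsup_eq : ∀ y, (⨆ A : 𝒜, F (A : Set (Fin d → ℝ)) y) = ⨆ m : ℕ, F (g m) y := by
    intro y
    have hbdd : BddAbove (Set.range fun m : ℕ => F (g m) y) := by
      refine ⟨M, ?_⟩
      rintro r ⟨m, rfl⟩
      exact hbound _ y
    have hbdd2 : BddAbove (Set.range fun A : 𝒜 => F (A : Set (Fin d → ℝ)) y) := by
      refine ⟨M, ?_⟩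
      rintro r ⟨A, rfl⟩
      exact hbound _ y
    have h𝒜ne' : Nonempty 𝒜 := ⟨⟨A₀, hA₀⟩⟩
    apply le_antisymm
    · refine ciSup_le fun A => ?_
      obtain ⟨B, hB, happ⟩ := h₀app (A : Set (Fin d → ℝ)) A.2
      refine le_of_tendsto (htendsto _ A.2 B hB happ y) (Filter.Eventually.of_forall fun m => ?_)
      have : B m ∈ Set.range g := hg ▸ hB m
      obtain ⟨m', hm'⟩ := this
      rw [← hm']
      exact le_ciSup hbdd m'
    · refine ciSup_le fun m => ?_
      have hgm : g m ∈ 𝒜 := h₀sub (hg ▸ Set.mem_range_self m)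
      exact le_ciSup hbdd2 (⟨g m, hgm⟩ : 𝒜)
  have : (fun (y : ι → (Fin d → ℝ)) => ⨆ A : 𝒜, F (A : Set (Fin d → ℝ)) y)
      = fun y => ⨆ m : ℕ, F (g m) y := funext hsup_eq
  rw [hF] at this
  simp only [] at this
  rw [show (fun (y : ι → (Fin d → ℝ)) =>
      ⨆ A : 𝒜, |(∑ i : ι, (A : Set (Fin d → ℝ)).indicator (fun _ => (1:ℝ)) (y i))/c
        - (μ (A : Set (Fin d → ℝ))).toReal|) = fun y => ⨆ m : ℕ, F (g m) y from this]
  exact Measurable.iSup fun m => hFmeas (g m) (h₀sub (hg ▸ Set.mem_range_self m))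

open Classical in
lemma aux_main {E : Type*} [MeasurableSpace E] {n k : ℕ} (hkn : k ≤ n)
    (μ ν : Measure E) [IsProbabilityMeasure μ] [IsProbabilityMeasure ν]
    (𝔸 : Set E) (h𝔸 : MeasurableSet 𝔸) (hν : μ.restrict 𝔸 = μ 𝔸 • ν)
    {T : Type*} [MeasurableSpace T]
    (Ψ : (Fin k → E) → T) (hΨ : Measurable Ψ)
    (Φ : ((Fin n ⊕ Fin n) → E) → T) (hΦ : Measurable Φ)
    (hcompat : ∀ (z : (Fin n ⊕ Fin n) → E) (S : Finset (Fin n)) (hS : S.card = k),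
      (∀ i, z (Sum.inl i) ∈ 𝔸 ↔ i ∈ S) →
      Φ z = Ψ (fun j => z (Sum.inl (S.orderEmbOfFin hS j))))
    (π : Measure ((Fin n ⊕ Fin n) → E))
    (hπ : π = Measure.pi (Sum.elim (fun _ : Fin n => μ) (fun _ : Fin n => ν)))
    (Ek : Set ((Fin n ⊕ Fin n) → E))
    (hEk : Ek = {z | (Finset.univ.filter (fun i => z (Sum.inl i) ∈ 𝔸)).card = k})
    (hk : π Ek ≠ 0) :
    Measure.map Φ (ProbabilityTheory.cond π Ek) =
      Measure.map (fun z => Ψ (fun j => z (Sum.inr (Fin.castLE hkn j)))) π := by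
  classical
  haveI hinst : ∀ s : Fin n ⊕ Fin n,
      IsProbabilityMeasure (Sum.elim (fun _ : Fin n => μ) (fun _ : Fin n => ν) s) := by
    rintro (i | i) <;> dsimp <;> infer_instance
  haveI : IsProbabilityMeasure π := by rw [hπ]; infer_instance
  set ES : Finset (Fin n) → Set ((Fin n ⊕ Fin n) → E) :=
    fun S => {z | ∀ i, (z (Sum.inl i) ∈ 𝔸 ↔ i ∈ S)} with hES
  have hES_meas : ∀ S, MeasurableSet (ES S) := by
    intro S
    have : ES S = ⋂ i, (if i ∈ S then (fun z : (Fin n ⊕ Fin n) → E => z (Sum.inl i)) ⁻¹' 𝔸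
        else (fun z : (Fin n ⊕ Fin n) → E => z (Sum.inl i)) ⁻¹' 𝔸ᶜ) := by
      ext z
      simp only [hES, Set.mem_setOf_eq, Set.mem_iInter]
      refine forall_congr' fun i => ?_
      by_cases hi : i ∈ S <;> simp [hi]
    rw [this]
    exact MeasurableSet.iInter fun i => by
      split <;> [exact measurable_pi_apply _ h𝔸; exact measurable_pi_apply _ h𝔸.compl]
  have hdecomp : Ek = ⋃ S ∈ Finset.powersetCard k (Finset.univ : Finset (Fin n)), ES S := by
    ext z
    simp only [hEk, Set.mem_setOf_eq, Set.mem_iUnion, Finset.mem_powersetCard_univ, hES,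
      exists_prop]
    constructor
    · intro hz
      refine ⟨Finset.univ.filter (fun i => z (Sum.inl i) ∈ 𝔸), hz, fun i => ?_⟩
      simp [Finset.mem_filter]
    · rintro ⟨S, hS, hzS⟩
      have : Finset.univ.filter (fun i => z (Sum.inl i) ∈ 𝔸) = S := by
        ext i; simp [Finset.mem_filter, hzS i]
      rw [this, hS]
  have hEk_meas : MeasurableSet Ek := by
    rw [hdecomp]
    exact (Finset.powersetCard k Finset.univ).measurableSet_biUnion fun S _ => hES_meas S
  -- the key per-subset computation
  have key : ∀ (S : Finset (Fin n)) (hS : S.card = k) (B : Set T), MeasurableSet B →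
      π (ES S ∩ (fun z => Ψ (fun j => z (Sum.inl (S.orderEmbOfFin hS j)))) ⁻¹' B)
        = (μ 𝔸)^k * Measure.pi (fun _ : Fin k => ν) (Ψ ⁻¹' B) * (μ 𝔸ᶜ)^(n-k) := by
    intro S hS B hB
    have hS' : Sᶜ.card = n - k := by
      rw [Finset.card_compl, hS, Fintype.card_fin]
    set e : Fin k ↪o Fin n := S.orderEmbOfFin hS with he
    set e' : Fin (n-k) ↪o Fin n := Sᶜ.orderEmbOfFin hS' with he'
    have hemem : ∀ j, e j ∈ S := fun j => Finset.orderEmbOfFin_mem S hS j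
    have he'mem : ∀ j, e' j ∉ S := fun j =>
      Finset.mem_compl.1 (Finset.orderEmbOfFin_mem Sᶜ hS' j)
    set sel : (Fin k ⊕ Fin (n-k)) → (Fin n ⊕ Fin n) :=
      Sum.elim (fun j => Sum.inl (e j)) (fun j => Sum.inl (e' j)) with hsel
    have hinj : Function.Injective sel := by
      rintro (a | a) (b | b) h <;> simp only [hsel, Sum.elim_inl, Sum.elim_inr,
        Sum.inl.injEq] at h
      · exact congrArg Sum.inl (e.injective h)
      · exact absurd (h ▸ hemem a) (he'mem b)
      · exact absurd (h.symm ▸ hemem b) (he'mem a)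
      · exact congrArg Sum.inr (e'.injective h)
    set equiv := MeasurableEquiv.sumPiEquivProdPi (fun _ : Fin k ⊕ Fin (n-k) => E) with hequiv
    set R : Set ((Fin k → E) × (Fin (n-k) → E)) :=
      (Ψ ⁻¹' B ∩ Set.pi Set.univ (fun _ : Fin k => 𝔸)) ×ˢ
        (Set.pi Set.univ (fun _ : Fin (n-k) => 𝔸ᶜ)) with hR
    have hRmeas : MeasurableSet R :=
      ((hΨ hB).inter (MeasurableSet.univ_pi fun _ => h𝔸)).prod
        (MeasurableSet.univ_pi fun _ => h𝔸.compl)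
    set D : Set ((Fin k ⊕ Fin (n-k)) → E) := equiv ⁻¹' R with hD
    have hDmeas : MeasurableSet D := equiv.measurable hRmeas
    have hset : ES S ∩ (fun z => Ψ (fun j => z (Sum.inl (e j)))) ⁻¹' B
        = (fun z (j : Fin k ⊕ Fin (n-k)) => z (sel j)) ⁻¹' D := by
      ext z
      have hcoe : equiv (fun j => z (sel j))
          = (fun j : Fin k => z (Sum.inl (e j)), fun j : Fin (n-k) => z (Sum.inl (e' j))) := rfl
      simp only [Set.mem_inter_iff, Set.mem_preimage, hD, hcoe, hR, Set.mem_prod,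
        Set.mem_inter_iff, Set.mem_preimage, Set.mem_pi, Set.mem_univ, forall_true_left,
        Set.mem_compl_iff, hES, Set.mem_setOf_eq, true_implies]
      constructor
      · rintro ⟨hiff, hΨB⟩
        exact ⟨⟨hΨB, fun j => (hiff _).2 (hemem j)⟩, fun j => fun hc => he'mem j ((hiff _).1 hc)⟩
      · rintro ⟨⟨hΨB, h1⟩, h2⟩
        refine ⟨fun i => ⟨fun hz => ?_, fun hi => ?_⟩, hΨB⟩
        · by_contra hiS
          have hic : i ∈ Sᶜ := Finset.mem_compl.2 hiS
          have : (i : Fin n) ∈ Set.range e' := by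
            rw [Finset.range_orderEmbOfFin]
            exact hic
          obtain ⟨j, rfl⟩ := this
          exact h2 j hz
        · have : (i : Fin n) ∈ Set.range e := by
            rw [Finset.range_orderEmbOfFin]
            exact hi
          obtain ⟨j, rfl⟩ := this
          exact h1 j
    rw [hset, ← Measure.map_apply (f := fun (z : (Fin n ⊕ Fin n) → E)
        (j : Fin k ⊕ Fin (n-k)) => z (sel j))
        (measurable_pi_lambda _ fun j => measurable_pi_apply _) hDmeas,
      hπ, aux_map_comp_pi _ sel hinj]
    have hconst : (fun j => (Sum.elim (fun _ : Fin n => μ) (fun _ : Fin n => ν)) (sel j))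
        = fun _ : Fin k ⊕ Fin (n-k) => μ := by
      funext j; cases j <;> rfl
    rw [hconst]
    have hmp := measurePreserving_sumPiEquivProdPi_symm
      (fun _ : Fin k ⊕ Fin (n-k) => (μ : Measure E))
    rw [← hmp.map_eq, Measure.map_apply (MeasurableEquiv.measurable _) hDmeas]
    have hpre : (MeasurableEquiv.sumPiEquivProdPi (fun _ : Fin k ⊕ Fin (n-k) => E)).symm ⁻¹' D
        = R := by
      rw [hD]
      ext w
      simp [hequiv, MeasurableEquiv.apply_symm_apply]
    rw [hpre, hR, Measure.prod_prod, aux_pi_inter_box μ ν h𝔸 hν _ (hΨ hB), Measure.pi_pi]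
    congr 1
    rw [Finset.prod_const, Finset.card_univ, Fintype.card_fin]
  -- value of π on each ES S
  have hESval : ∀ (S : Finset (Fin n)), S.card = k →
      π (ES S) = (μ 𝔸)^k * (μ 𝔸ᶜ)^(n-k) := by
    intro S hS
    have := key S hS Set.univ MeasurableSet.univ
    simpa using this
  -- disjointness
  have hdisj : ∀ S ∈ Finset.powersetCard k (Finset.univ : Finset (Fin n)),
      ∀ U ∈ Finset.powersetCard k (Finset.univ : Finset (Fin n)), S ≠ U →
      Disjoint (ES S) (ES U) := by
    intro S _ U _ hSU
    rw [Set.disjoint_left]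
    intro z hzS hzU
    exact hSU (Finset.ext fun i => (hzS i).symm.trans (hzU i))
  -- total mass of Ek
  have hπEk : π Ek = (Finset.powersetCard k (Finset.univ : Finset (Fin n))).card *
      ((μ 𝔸)^k * (μ 𝔸ᶜ)^(n-k)) := by
    rw [hdecomp, measure_biUnion_finset hdisj (fun S _ => hES_meas S)]
    rw [Finset.sum_congr rfl (fun S hS =>
      hESval S (Finset.mem_powersetCard_univ.1 hS))]
    rw [Finset.sum_const, nsmul_eq_mul]
  -- now the main computation
  ext B hB
  have hΨsel : Measurable (fun z : (Fin n ⊕ Fin n) → E =>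
      Ψ (fun j => z (Sum.inr (Fin.castLE hkn j)))) :=
    hΨ.comp (measurable_pi_lambda _ fun j => measurable_pi_apply _)
  rw [Measure.map_apply hΦ hB, Measure.map_apply hΨsel hB]
  -- left side
  have hπEkW : π (Ek ∩ Φ ⁻¹' B) =
      (Finset.powersetCard k (Finset.univ : Finset (Fin n))).card *
      ((μ 𝔸)^k * Measure.pi (fun _ : Fin k => ν) (Ψ ⁻¹' B) * (μ 𝔸ᶜ)^(n-k)) := by
    rw [hdecomp, Set.iUnion₂_inter]
    rw [measure_biUnion_finset
      (fun S hS U hU hSU => (hdisj S hS U hU hSU).mono Set.inter_subset_left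
        Set.inter_subset_left)
      (fun S _ => (hES_meas S).inter (hΦ hB))]
    rw [Finset.sum_congr rfl (fun S hSmem => ?_), Finset.sum_const, nsmul_eq_mul]
    have hS : S.card = k := Finset.mem_powersetCard_univ.1 hSmem
    have hsame : ES S ∩ Φ ⁻¹' B
        = ES S ∩ (fun z => Ψ (fun j => z (Sum.inl (S.orderEmbOfFin hS j)))) ⁻¹' B := by
      ext z
      simp only [Set.mem_inter_iff, Set.mem_preimage, hES, Set.mem_setOf_eq]
      exact and_congr_right fun hz => by rw [hcompat z S hS hz]
    rw [hsame]
    exact key S hS B hB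
  -- right side
  have hrhs : π ((fun z => Ψ (fun j => z (Sum.inr (Fin.castLE hkn j)))) ⁻¹' B)
      = Measure.pi (fun _ : Fin k => ν) (Ψ ⁻¹' B) := by
    have hinjY : Function.Injective (fun j : Fin k => Sum.inr (α := Fin n) (Fin.castLE hkn j)) :=
      fun a b h => Fin.castLE_injective hkn (Sum.inr_injective h)
    have : (fun z : (Fin n ⊕ Fin n) → E => Ψ (fun j => z (Sum.inr (Fin.castLE hkn j)))) ⁻¹' B
        = (fun (z : (Fin n ⊕ Fin n) → E) (j : Fin k) => z (Sum.inr (Fin.castLE hkn j)))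
          ⁻¹' (Ψ ⁻¹' B) := rfl
    rw [this, ← Measure.map_apply (f := fun (z : (Fin n ⊕ Fin n) → E) (j : Fin k) =>
        z (Sum.inr (Fin.castLE hkn j)))
      (measurable_pi_lambda _ fun j => measurable_pi_apply _) (hΨ hB),
      hπ, aux_map_comp_pi _ _ hinjY]
    rfl
  rw [ProbabilityTheory.cond_apply hEk_meas, hπEkW, hπEk, hrhs]
  -- final arithmetic in ℝ≥0∞
  have hne0 : ((Finset.powersetCard k (Finset.univ : Finset (Fin n))).card : ℝ≥0∞) *
      ((μ 𝔸)^k * (μ 𝔸ᶜ)^(n-k)) ≠ 0 := by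
    rw [← hπEk]; exact hk
  have hnetop : ((Finset.powersetCard k (Finset.univ : Finset (Fin n))).card : ℝ≥0∞) *
      ((μ 𝔸)^k * (μ 𝔸ᶜ)^(n-k)) ≠ ∞ := by
    rw [← hπEk]; exact measure_ne_top π Ek
  have harr : ((Finset.powersetCard k (Finset.univ : Finset (Fin n))).card : ℝ≥0∞) *
      ((μ 𝔸)^k * Measure.pi (fun _ : Fin k => ν) (Ψ ⁻¹' B) * (μ 𝔸ᶜ)^(n-k))
      = (((Finset.powersetCard k (Finset.univ : Finset (Fin n))).card : ℝ≥0∞) *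
        ((μ 𝔸)^k * (μ 𝔸ᶜ)^(n-k))) * Measure.pi (fun _ : Fin k => ν) (Ψ ⁻¹' B) := by
    ring
  rw [harr, ← mul_assoc, ENNReal.inv_mul_cancel hne0 hnetop, one_mul]

lemma aux_map_cond_comp {Ω α T : Type*} [MeasurableSpace Ω] [MeasurableSpace α]
    [MeasurableSpace T] (P : Measure Ω) (Z : Ω → α) (hZ : Measurable Z) (g : α → T)
    (hg : Measurable g) (Ek : Set α) (hEk : MeasurableSet Ek) :
    Measure.map (fun ω => g (Z ω)) (ProbabilityTheory.cond P (Z ⁻¹' Ek))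
      = Measure.map g (ProbabilityTheory.cond (Measure.map Z P) Ek) := by
  ext B hB
  rw [Measure.map_apply (f := fun ω => g (Z ω)) (hg.comp hZ) hB, Measure.map_apply hg hB,
    ProbabilityTheory.cond_apply (hZ hEk), ProbabilityTheory.cond_apply hEk,
    Measure.map_apply hZ hEk, Measure.map_apply hZ (hEk.inter (hg hB)), Set.preimage_inter]
  rfl

lemma aux_sum_sel {E : Type*} {n k : ℕ} (z : (Fin n ⊕ Fin n) → E) (S : Finset (Fin n))
    (hS : S.card = k) (𝔸 A : Set E) (hA𝔸 : A ⊆ 𝔸)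
    (hiff : ∀ i, z (Sum.inl i) ∈ 𝔸 ↔ i ∈ S) :
    ∑ i : Fin n, A.indicator (fun _ => (1:ℝ)) (z (Sum.inl i))
      = ∑ j : Fin k, A.indicator (fun _ => (1:ℝ)) (z (Sum.inl (S.orderEmbOfFin hS j))) := by
  classical
  have hvanish : ∀ i ∈ Finset.univ, i ∉ S → A.indicator (fun _ => (1:ℝ)) (z (Sum.inl i)) = 0 := by
    intro i _ hiS
    have : z (Sum.inl i) ∉ A := fun hc => hiS ((hiff i).1 (hA𝔸 hc))
    exact Set.indicator_of_notMem this _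
  rw [← Finset.sum_subset (Finset.subset_univ S) hvanish]
  have hmap : S = Finset.map (S.orderEmbOfFin hS).toEmbedding Finset.univ := by
    ext i
    simp only [Finset.mem_map, Finset.mem_univ, true_and, RelEmbedding.coe_toEmbedding]
    constructor
    · intro hi
      have : (i : Fin n) ∈ Set.range (S.orderEmbOfFin hS) := by
        rw [Finset.range_orderEmbOfFin]; exact hi
      obtain ⟨j, hj⟩ := this
      exact ⟨j, hj⟩
    · rintro ⟨j, rfl⟩
      exact Finset.orderEmbOfFin_mem S hS j
  calc ∑ i ∈ S, A.indicator (fun _ => (1:ℝ)) (z (Sum.inl i))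
      = ∑ i ∈ Finset.map (S.orderEmbOfFin hS).toEmbedding Finset.univ,
          A.indicator (fun _ => (1:ℝ)) (z (Sum.inl i)) := by conv_lhs => rw [hmap]
    _ = ∑ j : Fin k, A.indicator (fun _ => (1:ℝ)) (z (Sum.inl (S.orderEmbOfFin hS j))) :=
        Finset.sum_map _ _ _

open Classical in
lemma aux_Y_algebra {n k : ℕ} (hkn : k ≤ n) {E : Type*} (y : Fin n → E) (A : Set E) :
    ((k : ℝ)/(n : ℝ)) * ((∑ i : Fin n, if (i : ℕ) < k ∧ y i ∈ A then (1:ℝ) else 0) / (k : ℝ))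
      = (∑ j : Fin k, A.indicator (fun _ => (1:ℝ)) (y (Fin.castLE hkn j))) / (n : ℝ) := by
  classical
  have hsum : (∑ i : Fin n, if (i : ℕ) < k ∧ y i ∈ A then (1:ℝ) else 0)
      = ∑ j : Fin k, A.indicator (fun _ => (1:ℝ)) (y (Fin.castLE hkn j)) := by
    have hvanish : ∀ i ∈ Finset.univ, i ∉ Finset.univ.filter (fun i : Fin n => (i : ℕ) < k) →
        (if (i : ℕ) < k ∧ y i ∈ A then (1:ℝ) else 0) = 0 := by
      intro i _ hi
      simp only [Finset.mem_filter, Finset.mem_univ, true_and] at hi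
      simp [hi]
    rw [← Finset.sum_subset (Finset.subset_univ _) hvanish]
    have hfil : Finset.univ.filter (fun i : Fin n => (i : ℕ) < k)
        = Finset.map (Fin.castLEEmb hkn) Finset.univ := by
      ext i
      simp only [Finset.mem_filter, Finset.mem_univ, true_and, Finset.mem_map]
      constructor
      · intro hi
        exact ⟨⟨(i : ℕ), hi⟩, by ext; simp [Fin.castLEEmb]⟩
      · rintro ⟨j, rfl⟩
        simpa [Fin.castLEEmb] using j.isLt
    rw [hfil, Finset.sum_map]
    refine Finset.sum_congr rfl fun j _ => ?_
    have hj : ((Fin.castLEEmb hkn) j : Fin n) = Fin.castLE hkn j := rfl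
    rw [hj]
    have hlt : ((Fin.castLE hkn j : Fin n) : ℕ) < k := by
      simpa using j.isLt
    by_cases hmem : y (Fin.castLE hkn j) ∈ A
    · simp [hlt, hmem, Set.indicator_of_mem]
    · simp [hmem, Set.indicator_of_notMem]
  rw [hsum]
  rcases Nat.eq_zero_or_pos k with rfl | hk
  · simp
  · have hk0 : (k : ℝ) ≠ 0 := Nat.cast_ne_zero.2 hk.ne'
    set S := ∑ j : Fin k, A.indicator (fun _ => (1:ℝ)) (y (Fin.castLE hkn j))
    rw [div_mul_div_comm, mul_comm (n : ℝ) (k : ℝ)]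
    exact mul_div_mul_left S (n : ℝ) hk0

open Classical in
lemma aux_pipeline {Ω E : Type*} [MeasurableSpace Ω] [MeasurableSpace E] {n k : ℕ}
    (hkn : k ≤ n) (P : Measure Ω) [IsProbabilityMeasure P]
    (μ ν : Measure E) [IsProbabilityMeasure μ] [IsProbabilityMeasure ν]
    (𝔸 : Set E) (h𝔸 : MeasurableSet 𝔸) (hν : μ.restrict 𝔸 = μ 𝔸 • ν)
    (Z : Ω → (Fin n ⊕ Fin n) → E) (hZ : Measurable Z)
    (hπ : Measure.map Z P = Measure.pi (Sum.elim (fun _ : Fin n => μ) (fun _ : Fin n => ν)))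
    (Ek : Set ((Fin n ⊕ Fin n) → E))
    (hEk : Ek = {z | (Finset.univ.filter (fun i => z (Sum.inl i) ∈ 𝔸)).card = k})
    (hEkmeas : MeasurableSet Ek) (hk : P (Z ⁻¹' Ek) ≠ 0)
    {T : Type*} [MeasurableSpace T] (Ψ : (Fin k → E) → T) (hΨ : Measurable Ψ)
    (Φ : ((Fin n ⊕ Fin n) → E) → T) (hΦ : Measurable Φ)
    (hcompat : ∀ (z : (Fin n ⊕ Fin n) → E) (S : Finset (Fin n)) (hS : S.card = k),
      (∀ i, z (Sum.inl i) ∈ 𝔸 ↔ i ∈ S) →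
      Φ z = Ψ (fun j => z (Sum.inl (S.orderEmbOfFin hS j)))) :
    Measure.map (fun ω => Φ (Z ω)) (ProbabilityTheory.cond P (Z ⁻¹' Ek))
      = Measure.map (fun ω => Ψ (fun j => Z ω (Sum.inr (Fin.castLE hkn j)))) P := by
  have hΨsel : Measurable (fun z : (Fin n ⊕ Fin n) → E =>
      Ψ (fun j => z (Sum.inr (Fin.castLE hkn j)))) :=
    hΨ.comp (measurable_pi_lambda _ fun j => measurable_pi_apply _)
  have hk' : Measure.map Z P Ek ≠ 0 := by
    rwa [Measure.map_apply hZ hEkmeas]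
  rw [aux_map_cond_comp P Z hZ Φ hΦ Ek hEkmeas]
  have hrhs : (fun ω => Ψ (fun j => Z ω (Sum.inr (Fin.castLE hkn j))))
      = (fun z : (Fin n ⊕ Fin n) → E => Ψ (fun j => z (Sum.inr (Fin.castLE hkn j)))) ∘ Z := rfl
  rw [hrhs, ← Measure.map_map hΨsel hZ]
  have := aux_main hkn μ ν 𝔸 h𝔸 hν Ψ hΨ Φ hΦ hcompat (Measure.map Z P) hπ Ek hEk hk'
  exact this

/-- **Conditioning trick.** Conditionally on `K = k`, the finite-dimensional distributions of
`μ_n` over `𝒜` coincide with those of `(k/n) μ_k^Y` where `Y_1, …, Y_n` is an independent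
sample from `μ(· | 𝔸)`; in particular the same holds for the maximal deviation. -/
theorem conditioning_trick
    {Ω : Type*} [MeasurableSpace Ω] (P : Measure Ω) [IsProbabilityMeasure P]
    {d n : ℕ} (hn : 0 < n)
    (μ : Measure (Fin d → ℝ)) [IsProbabilityMeasure μ]
    (X Y : Fin n → Ω → (Fin d → ℝ))
    (hXmeas : ∀ i, Measurable (X i)) (hYmeas : ∀ i, Measurable (Y i))
    (𝔸 : Set (Fin d → ℝ)) (h𝔸meas : MeasurableSet 𝔸) (hp : 0 < (μ 𝔸).toReal)
    (hXlaw : ∀ i, Measure.map (X i) P = μ)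
    (hYlaw : ∀ i, Measure.map (Y i) P = ProbabilityTheory.cond μ 𝔸)
    (hindep : iIndepFun (Sum.elim X Y) P)
    (𝒜 : Set (Set (Fin d → ℝ))) (h𝒜ne : 𝒜.Nonempty)
    (h𝒜meas : ∀ A ∈ 𝒜, MeasurableSet A) (h𝒜pm : PointwiseMeasurable 𝒜)
    (h𝔸 : ∀ A ∈ 𝒜, A ⊆ 𝔸)
    (k : ℕ) (hkn : k ≤ n) (hk : P {ω | rareCount X 𝔸 ω = k} ≠ 0) :
    (∀ (m : ℕ) (A : Fin m → Set (Fin d → ℝ)), (∀ j, A j ∈ 𝒜) →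
      Measure.map (fun ω (j : Fin m) => empMeas X ω (A j))
          (ProbabilityTheory.cond P {ω | rareCount X 𝔸 ω = k}) =
        Measure.map (fun ω (j : Fin m) => ((k : ℝ) / n) * empMeasFirst Y k ω (A j)) P) ∧
    Measure.map (fun ω => ⨆ A : 𝒜, |empMeas X ω ↑A - (μ ↑A).toReal|)
        (ProbabilityTheory.cond P {ω | rareCount X 𝔸 ω = k}) =
      Measure.map (fun ω => ⨆ A : 𝒜, |((k : ℝ) / n) * empMeasFirst Y k ω ↑A - (μ ↑A).toReal|)
        P := by
  classical
  set ν : Measure (Fin d → ℝ) := ProbabilityTheory.cond μ 𝔸 with hνdef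
  have hμ𝔸0 : μ 𝔸 ≠ 0 := by
    intro h
    rw [h] at hp
    simp at hp
  haveI : IsProbabilityMeasure ν := cond_isProbabilityMeasure hμ𝔸0
  have hν : μ.restrict 𝔸 = μ 𝔸 • ν := by
    rw [hνdef, ProbabilityTheory.cond, smul_smul,
      ENNReal.mul_inv_cancel hμ𝔸0 (measure_ne_top μ 𝔸), one_smul]
  set Z : Ω → (Fin n ⊕ Fin n) → (Fin d → ℝ) := fun ω s => Sum.elim X Y s ω with hZdef
  have hZelim : ∀ s, Measurable (Sum.elim X Y s) := by
    rintro (i | i)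
    · exact hXmeas i
    · exact hYmeas i
  have hZmeas : Measurable Z :=
    measurable_pi_lambda _ fun s => hZelim s
  have hπ : Measure.map Z P = Measure.pi (Sum.elim (fun _ : Fin n => μ) (fun _ : Fin n => ν)) := by
    rw [hZdef]
    rw [aux_iIndepFun_map_pi P (Sum.elim X Y) hZelim hindep]
    congr 1
    funext s
    cases s with
    | inl i => exact hXlaw i
    | inr i => exact hYlaw i
  set Ek : Set ((Fin n ⊕ Fin n) → (Fin d → ℝ)) :=
    {z | (Finset.univ.filter (fun i => z (Sum.inl i) ∈ 𝔸)).card = k} with hEkdef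
  have hEkmeas : MeasurableSet Ek := by
    have hcount : Measurable (fun z : (Fin n ⊕ Fin n) → (Fin d → ℝ) =>
        (Finset.univ.filter (fun i => z (Sum.inl i) ∈ 𝔸)).card) := by
      simp_rw [Finset.card_filter]
      exact Finset.measurable_sum _ fun i _ =>
        Measurable.ite ((measurable_pi_apply (Sum.inl i)) h𝔸meas) measurable_const
          measurable_const
    exact hcount (measurableSet_singleton k)
  have hpre : {ω | rareCount X 𝔸 ω = k} = Z ⁻¹' Ek := by
    ext ω
    simp only [Set.mem_setOf_eq, Set.mem_preimage, hEkdef, rareCount]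
    rfl
  have hk' : P (Z ⁻¹' Ek) ≠ 0 := hpre ▸ hk
  constructor
  · -- finite-dimensional part
    intro m A hA
    set Ψ : (Fin k → (Fin d → ℝ)) → (Fin m → ℝ) := fun y j =>
      (∑ j' : Fin k, (A j).indicator (fun _ => (1:ℝ)) (y j')) / (n : ℝ) with hΨdef
    set Φ : ((Fin n ⊕ Fin n) → (Fin d → ℝ)) → (Fin m → ℝ) := fun z j =>
      (∑ i : Fin n, (A j).indicator (fun _ => (1:ℝ)) (z (Sum.inl i))) / (n : ℝ) with hΦdef
    have hΨm : Measurable Ψ :=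
      measurable_pi_lambda _ fun j => Measurable.div_const
        (Finset.measurable_sum _ fun j' _ =>
          (measurable_const.indicator (h𝒜meas _ (hA j))).comp (measurable_pi_apply j')) _
    have hΦm : Measurable Φ :=
      measurable_pi_lambda _ fun j => Measurable.div_const
        (Finset.measurable_sum _ fun i _ =>
          (measurable_const.indicator (h𝒜meas _ (hA j))).comp (measurable_pi_apply (Sum.inl i))) _
    have hcompat : ∀ (z : (Fin n ⊕ Fin n) → (Fin d → ℝ)) (S : Finset (Fin n)) (hS : S.card = k),
        (∀ i, z (Sum.inl i) ∈ 𝔸 ↔ i ∈ S) →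
        Φ z = Ψ (fun j => z (Sum.inl (S.orderEmbOfFin hS j))) := by
      intro z S hS hiff
      funext j
      simp only [hΦdef, hΨdef]
      rw [aux_sum_sel z S hS 𝔸 (A j) (h𝔸 _ (hA j)) hiff]
    have hL : (fun ω (j : Fin m) => empMeas X ω (A j)) = fun ω => Φ (Z ω) := rfl
    have hR : (fun ω (j : Fin m) => ((k : ℝ) / n) * empMeasFirst Y k ω (A j))
        = fun ω => Ψ (fun j => Z ω (Sum.inr (Fin.castLE hkn j))) := by
      funext ω j
      have := aux_Y_algebra hkn (fun i => Y i ω) (A j)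
      simpa [empMeasFirst, hΨdef, hZdef] using this
    rw [hL, hR, hpre]
    exact aux_pipeline hkn P μ ν 𝔸 h𝔸meas hν Z hZmeas hπ Ek hEkdef hEkmeas hk' Ψ hΨm Φ hΦm hcompat
  · -- supremum part
    set Ψ : (Fin k → (Fin d → ℝ)) → ℝ := fun y =>
      ⨆ A : 𝒜, |(∑ j' : Fin k, (A : Set (Fin d → ℝ)).indicator (fun _ => (1:ℝ)) (y j')) / (n : ℝ)
        - (μ (A : Set (Fin d → ℝ))).toReal| with hΨdef
    set Φ : ((Fin n ⊕ Fin n) → (Fin d → ℝ)) → ℝ := fun z =>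
      ⨆ A : 𝒜, |(∑ i : Fin n, (A : Set (Fin d → ℝ)).indicator (fun _ => (1:ℝ)) (z (Sum.inl i))) / (n : ℝ)
        - (μ (A : Set (Fin d → ℝ))).toReal| with hΦdef
    have hΨm : Measurable Ψ := aux_measurable_sup μ 𝒜 h𝒜ne h𝒜meas h𝒜pm (n : ℝ)
    have hΦm : Measurable Φ :=
      (aux_measurable_sup μ 𝒜 h𝒜ne h𝒜meas h𝒜pm (ι := Fin n) (n : ℝ)).comp
        (measurable_pi_lambda _ fun i => measurable_pi_apply (Sum.inl i))
    have hcompat : ∀ (z : (Fin n ⊕ Fin n) → (Fin d → ℝ)) (S : Finset (Fin n)) (hS : S.card = k),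
        (∀ i, z (Sum.inl i) ∈ 𝔸 ↔ i ∈ S) →
        Φ z = Ψ (fun j => z (Sum.inl (S.orderEmbOfFin hS j))) := by
      intro z S hS hiff
      simp only [hΦdef, hΨdef]
      exact iSup_congr fun A => by
        rw [aux_sum_sel z S hS 𝔸 (A : Set (Fin d → ℝ)) (h𝔸 _ A.2) hiff]
    have hL : (fun ω => ⨆ A : 𝒜, |empMeas X ω ↑A - (μ ↑A).toReal|) = fun ω => Φ (Z ω) := rfl
    have hR : (fun ω => ⨆ A : 𝒜, |((k : ℝ) / n) * empMeasFirst Y k ω ↑A - (μ ↑A).toReal|)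
        = fun ω => Ψ (fun j => Z ω (Sum.inr (Fin.castLE hkn j))) := by
      funext ω
      simp only [hΨdef]
      refine iSup_congr fun A => ?_
      congr 1
      have := aux_Y_algebra hkn (fun i => Y i ω) (A : Set (Fin d → ℝ))
      simpa [empMeasFirst, hZdef] using this
    rw [hL, hR, hpre]
    exact aux_pipeline hkn P μ ν 𝔸 h𝔸meas hν Z hZmeas hπ Ek hEkdef hEkmeas hk' Ψ hΨm Φ hΦm hcompat
end
end

section
/- Rademacher–Hoeffding step: fix k ≥ 1 and points y_1,…,y_k, y_1',…,y_k' ∈ ℝ^d, and let σ_1,…,σ_k be independent Rademacher random variables (P(σ_i = 1) = P(σ_i = −1) = 1/2). Then for every u > 0, P( sup_{A ∈ 𝒜} Σ_{i=1}^k σ_i·(1{y_i ∈ A} − 1{y_i' ∈ A}) ≥ u ) ≤ S_𝒜(2k)·exp( − u² / (2k) ). -/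
open MeasureTheory ProbabilityTheory Set Filter
open scoped ENNReal NNReal BigOperators Topology

noncomputable section

lemma my_integrable_dirac {f : ℝ → ℝ} (hf : Measurable f) (a : ℝ) :
    Integrable f (Measure.dirac a) := by
  refine ⟨hf.aestronglyMeasurable, ?_⟩
  rw [HasFiniteIntegral, lintegral_dirac]
  exact ENNReal.coe_lt_top

lemma rad_int {Ω : Type*} [MeasurableSpace Ω] (P : Measure Ω) [IsProbabilityMeasure P]
    (σ : Ω → ℝ) (hm : Measurable σ)
    (hlaw : Measure.map σ P = (2⁻¹ : ℝ≥0∞) • Measure.dirac (1 : ℝ) +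
      (2⁻¹ : ℝ≥0∞) • Measure.dirac (-1 : ℝ)) (c t : ℝ) :
    Integrable (fun ω => Real.exp (t * (σ ω * c))) P := by
  have hg : Measurable fun x : ℝ => Real.exp (t * (x * c)) := by fun_prop
  have h := (integrable_map_measure (μ := P) (f := σ) (g := fun x : ℝ => Real.exp (t * (x * c)))
    hg.aestronglyMeasurable hm.aemeasurable).mp
  rw [hlaw] at h
  exact h (((my_integrable_dirac hg 1).smul_measure (by norm_num)).add_measure
    ((my_integrable_dirac hg (-1)).smul_measure (by norm_num)))

lemma rad_mgf_le {Ω : Type*} [MeasurableSpace Ω] (P : Measure Ω) [IsProbabilityMeasure P]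
    (σ : Ω → ℝ) (hm : Measurable σ)
    (hlaw : Measure.map σ P = (2⁻¹ : ℝ≥0∞) • Measure.dirac (1 : ℝ) +
      (2⁻¹ : ℝ≥0∞) • Measure.dirac (-1 : ℝ)) {c : ℝ} (hc : |c| ≤ 1) (t : ℝ) :
    mgf (fun ω => σ ω * c) P t ≤ Real.exp (t ^ 2 / 2) := by
  have hg : Measurable fun x : ℝ => Real.exp (t * (x * c)) := by fun_prop
  have h1 : mgf (fun ω => σ ω * c) P t = ∫ x, Real.exp (t * (x * c)) ∂(Measure.map σ P) := by
    rw [mgf, integral_map hm.aemeasurable hg.aestronglyMeasurable]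
  have h2 : ∫ x, Real.exp (t * (x * c)) ∂(Measure.map σ P) = Real.cosh (t * c) := by
    rw [hlaw, integral_add_measure ((my_integrable_dirac hg 1).smul_measure (by norm_num))
      ((my_integrable_dirac hg (-1)).smul_measure (by norm_num)),
      integral_smul_measure, integral_smul_measure, integral_dirac, integral_dirac,
      Real.cosh_eq]
    simp only [ENNReal.toReal_inv, ENNReal.toReal_ofNat, smul_eq_mul]
    rw [show t * (1 * c) = t * c by ring, show t * (-1 * c) = -(t * c) by ring]
    ring
  rw [h1, h2]
  calc Real.cosh (t * c) ≤ Real.exp ((t * c) ^ 2 / 2) := Real.cosh_le_exp_half_sq _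
  _ ≤ Real.exp (t ^ 2 / 2) := by
      apply Real.exp_le_exp.mpr
      have hc2 : c ^ 2 ≤ 1 := by nlinarith [sq_abs c, abs_nonneg c]
      have : (t * c) ^ 2 ≤ t ^ 2 := by nlinarith [sq_nonneg t]
      linarith

lemma hoeff_fixed {Ω : Type*} [MeasurableSpace Ω] (P : Measure Ω) [IsProbabilityMeasure P]
    {k : ℕ} (hk : 1 ≤ k) (σ : Fin k → Ω → ℝ) (hσmeas : ∀ i, Measurable (σ i))
    (hσindep : iIndepFun σ P)
    (hσlaw : ∀ i, Measure.map (σ i) P =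
      (2⁻¹ : ℝ≥0∞) • Measure.dirac (1 : ℝ) + (2⁻¹ : ℝ≥0∞) • Measure.dirac (-1 : ℝ))
    (c : Fin k → ℝ) (hc : ∀ i, |c i| ≤ 1) (u : ℝ) (hu : 0 < u) :
    P {ω | u ≤ ∑ i : Fin k, σ i ω * c i} ≤
      ENNReal.ofReal (Real.exp (-u ^ 2 / (2 * k))) := by
  have hk0 : (k : ℝ) ≠ 0 := by positivity
  set t : ℝ := u / k with ht
  have ht0 : 0 ≤ t := by positivity
  set Y : Fin k → Ω → ℝ := fun i ω => σ i ω * c i with hY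
  have hYmeas : ∀ i, Measurable (Y i) := fun i => (hσmeas i).mul_const _
  have hYindep : iIndepFun Y P :=
    hσindep.comp (fun i x => x * c i) (fun i => measurable_mul_const _)
  have h_int : ∀ i ∈ Finset.univ, Integrable (fun ω => Real.exp (t * Y i ω)) P :=
    fun i _ => rad_int P (σ i) (hσmeas i) (hσlaw i) (c i) t
  have h_int_sum := hYindep.integrable_exp_mul_sum hYmeas h_int
  have hch := measure_ge_le_exp_mul_mgf (μ := P) (X := ∑ i, Y i) u ht0 h_int_sum
  have hmgf : mgf (∑ i, Y i) P t ≤ Real.exp (t ^ 2 / 2) ^ k := by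
    rw [hYindep.mgf_sum hYmeas]
    calc ∏ i, mgf (Y i) P t ≤ ∏ _i : Fin k, Real.exp (t ^ 2 / 2) :=
          Finset.prod_le_prod (fun i _ => mgf_nonneg)
            (fun i _ => rad_mgf_le P (σ i) (hσmeas i) (hσlaw i) (hc i) t)
    _ = Real.exp (t ^ 2 / 2) ^ k := by simp
  have hval : Real.exp (-t * u) * Real.exp (t ^ 2 / 2) ^ k = Real.exp (-u ^ 2 / (2 * k)) := by
    rw [← Real.exp_nat_mul, ← Real.exp_add]
    congr 1
    rw [ht]
    field_simp
    ring
  have hset : {ω | u ≤ ∑ i : Fin k, σ i ω * c i} = {ω | u ≤ (∑ i, Y i) ω} := by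
    ext ω; simp [hY]
  rw [hset, ENNReal.le_ofReal_iff_toReal_le (measure_ne_top P _) (Real.exp_nonneg _)]
  calc (P {ω | u ≤ (∑ i, Y i) ω}).toReal ≤ Real.exp (-t * u) * mgf (∑ i, Y i) P t := hch
  _ ≤ Real.exp (-t * u) * Real.exp (t ^ 2 / 2) ^ k :=
      mul_le_mul_of_nonneg_left hmgf (Real.exp_nonneg _)
  _ = Real.exp (-u ^ 2 / (2 * k)) := hval

lemma indicator_abs_sub_le {d : ℕ} (A : Set (Fin d → ℝ)) (z z' : Fin d → ℝ) :
    |A.indicator (fun _ => (1:ℝ)) z - A.indicator (fun _ => (1:ℝ)) z'| ≤ 1 := by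
  by_cases h : z ∈ A <;> by_cases h' : z' ∈ A <;>
    simp [Set.indicator_apply, h, h']

/-- **Rademacher–Hoeffding step.** For fixed points `y₁, …, y_k, y₁', …, y_k'` and independent
Rademacher variables `σ₁, …, σ_k`, for every `u > 0`,
`P(sup_{A ∈ 𝒜} Σᵢ σᵢ (1{yᵢ ∈ A} − 1{yᵢ' ∈ A}) ≥ u) ≤ S_𝒜(2k) exp(−u²/(2k))`. -/
theorem rademacher_hoeffding_step
    {Ω : Type*} [MeasurableSpace Ω] (P : Measure Ω) [IsProbabilityMeasure P]
    {d k : ℕ} (hk : 1 ≤ k)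
    (y y' : Fin k → (Fin d → ℝ))
    (σ : Fin k → Ω → ℝ) (hσmeas : ∀ i, Measurable (σ i))
    (hσindep : iIndepFun σ P)
    (hσlaw : ∀ i, Measure.map (σ i) P =
      (2⁻¹ : ℝ≥0∞) • Measure.dirac (1 : ℝ) + (2⁻¹ : ℝ≥0∞) • Measure.dirac (-1 : ℝ))
    (𝒜 : Set (Set (Fin d → ℝ))) (h𝒜ne : 𝒜.Nonempty)
    (h𝒜meas : ∀ A ∈ 𝒜, MeasurableSet A) (h𝒜pm : PointwiseMeasurable 𝒜) :
    ∀ u : ℝ, 0 < u →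
      P {ω | u ≤ ⨆ A : 𝒜, ∑ i : Fin k, σ i ω *
          ((↑A : Set (Fin d → ℝ)).indicator (fun _ => (1:ℝ)) (y i) -
            (↑A : Set (Fin d → ℝ)).indicator (fun _ => (1:ℝ)) (y' i))} ≤
        ENNReal.ofReal ((shatterCoeff 𝒜 (2 * k) : ℝ) *
          Real.exp (-u ^ 2 / (2 * k))) := by
  classical
  intro u hu
  -- concatenated sample of size 2k
  set x : Fin (2 * k) → (Fin d → ℝ) :=
    fun j => if h : (j : ℕ) < k then y ⟨j, h⟩ else y' ⟨(j : ℕ) - k, by omega⟩ with hx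
  have hyx : ∀ i : Fin k, y i ∈ Set.range x := by
    intro i
    refine ⟨⟨(i : ℕ), by omega⟩, ?_⟩
    simp only [hx]
    rw [dif_pos i.2]
  have hy'x : ∀ i : Fin k, y' i ∈ Set.range x := by
    intro i
    refine ⟨⟨k + (i : ℕ), by omega⟩, ?_⟩
    simp only [hx]
    rw [dif_neg (by omega)]
    exact congrArg y' (Fin.ext (by simp))
  set T : Set (Set (Fin d → ℝ)) := (fun A => A ∩ Set.range x) '' 𝒜 with hT
  have hTfin : T.Finite := by
    refine Set.Finite.subset (Set.finite_range x).finite_subsets ?_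
    rintro s ⟨A, hA, rfl⟩
    exact Set.inter_subset_right
  have hTne : T.Nonempty := h𝒜ne.image _
  have hrep0 : ∀ t ∈ T, ∃ A, A ∈ 𝒜 ∧ A ∩ Set.range x = t := by
    rintro t ⟨A, hA, rfl⟩
    exact ⟨A, hA, rfl⟩
  choose! rep hrep𝒜 hrepeq using hrep0
  set f : Set (Fin d → ℝ) → Ω → ℝ := fun t ω => ∑ i : Fin k, σ i ω *
      ((rep t).indicator (fun _ => (1:ℝ)) (y i) -
        (rep t).indicator (fun _ => (1:ℝ)) (y' i)) with hf
  set Tfin : Finset (Set (Fin d → ℝ)) := hTfin.toFinset with hTfinset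
  have hTfinne : Tfin.Nonempty := by
    rw [hTfinset, Set.Finite.toFinset_nonempty]; exact hTne
  -- membership transfer to representatives
  have hmem : ∀ A ∈ 𝒜, ∀ z ∈ Set.range x, (z ∈ A ↔ z ∈ rep (A ∩ Set.range x)) := by
    intro A hA z hz
    have hTmem : (A ∩ Set.range x) ∈ T := Set.mem_image_of_mem _ hA
    have h1 : rep (A ∩ Set.range x) ∩ Set.range x = A ∩ Set.range x := hrepeq _ hTmem
    constructor
    · intro hzA
      have h2 : z ∈ A ∩ Set.range x := ⟨hzA, hz⟩
      rw [← h1] at h2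
      exact h2.1
    · intro hzB
      have h2 : z ∈ rep (A ∩ Set.range x) ∩ Set.range x := ⟨hzB, hz⟩
      rw [h1] at h2
      exact h2.1
  have hind : ∀ A ∈ 𝒜, ∀ z ∈ Set.range x,
      A.indicator (fun _ => (1:ℝ)) z = (rep (A ∩ Set.range x)).indicator (fun _ => (1:ℝ)) z := by
    intro A hA z hz
    simp only [Set.indicator_apply]
    exact if_congr (hmem A hA z hz) rfl rfl
  have hsum : ∀ A, A ∈ 𝒜 → ∀ ω,
      (∑ i : Fin k, σ i ω * (A.indicator (fun _ => (1:ℝ)) (y i) -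
        A.indicator (fun _ => (1:ℝ)) (y' i))) = f (A ∩ Set.range x) ω := by
    intro A hA ω
    refine Finset.sum_congr rfl fun i _ => ?_
    rw [hind A hA (y i) (hyx i), hind A hA (y' i) (hy'x i)]
  -- the event is contained in a finite union
  have hne𝒜 : Nonempty 𝒜 := h𝒜ne.to_subtype
  have hsub : {ω | u ≤ ⨆ A : 𝒜, ∑ i : Fin k, σ i ω *
      ((↑A : Set (Fin d → ℝ)).indicator (fun _ => (1:ℝ)) (y i) -
        (↑A : Set (Fin d → ℝ)).indicator (fun _ => (1:ℝ)) (y' i))} ⊆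
      ⋃ t ∈ Tfin, {ω | u ≤ f t ω} := by
    intro ω hω
    simp only [Set.mem_setOf_eq] at hω
    have hbdd : ∀ A : 𝒜, (∑ i : Fin k, σ i ω *
        ((↑A : Set (Fin d → ℝ)).indicator (fun _ => (1:ℝ)) (y i) -
          (↑A : Set (Fin d → ℝ)).indicator (fun _ => (1:ℝ)) (y' i))) ≤
        Tfin.sup' hTfinne (fun t => f t ω) := by
      intro A
      rw [hsum (↑A) A.2 ω]
      have hmemT : (↑A : Set (Fin d → ℝ)) ∩ Set.range x ∈ Tfin := by
        rw [hTfinset, Set.Finite.mem_toFinset]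
        exact Set.mem_image_of_mem _ A.2
      exact Finset.le_sup' (fun t => f t ω) hmemT
    have hle : u ≤ Tfin.sup' hTfinne (fun t => f t ω) := le_trans hω (ciSup_le hbdd)
    obtain ⟨t, htT, hut⟩ := (Finset.le_sup'_iff hTfinne).mp hle
    exact Set.mem_biUnion htT hut
  -- cardinality bound
  have hcard : Tfin.card ≤ shatterCoeff 𝒜 (2 * k) := by
    have hbddAb : BddAbove (Set.range fun x' : Fin (2 * k) → (Fin d → ℝ) =>
        ((fun A => A ∩ Set.range x') '' 𝒜).ncard) := by
      refine ⟨Nat.card (Set (Fin (2 * k))), ?_⟩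
      rintro n ⟨x', rfl⟩
      refine le_trans (Set.ncard_le_ncard_of_injOn (fun s => x' ⁻¹' s) (fun a _ => Set.mem_univ _)
        ?_ Set.finite_univ) (le_of_eq (Set.ncard_univ _))
      rintro s hs t ht h
      obtain ⟨A, -, rfl⟩ := hs
      obtain ⟨B, -, rfl⟩ := ht
      dsimp only at h ⊢
      calc A ∩ Set.range x' = x' '' (x' ⁻¹' (A ∩ Set.range x')) :=
            (Set.image_preimage_eq_of_subset Set.inter_subset_right).symm
      _ = x' '' (x' ⁻¹' (B ∩ Set.range x')) := by rw [h]
      _ = B ∩ Set.range x' := Set.image_preimage_eq_of_subset Set.inter_subset_right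
    have h1 : Tfin.card = T.ncard := (Set.ncard_eq_toFinset_card T hTfin).symm
    have h2 : ((fun A => A ∩ Set.range x) '' 𝒜).ncard ≤ shatterCoeff 𝒜 (2 * k) :=
      le_ciSup hbddAb x
    rw [h1, hT]
    exact h2
  -- put everything together
  have hbound : ∀ t ∈ Tfin, P {ω | u ≤ f t ω} ≤
      ENNReal.ofReal (Real.exp (-u ^ 2 / (2 * k))) := by
    intro t _
    exact hoeff_fixed P hk σ hσmeas hσindep hσlaw
      (fun i => (rep t).indicator (fun _ => (1:ℝ)) (y i) -
        (rep t).indicator (fun _ => (1:ℝ)) (y' i))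
      (fun i => indicator_abs_sub_le (rep t) (y i) (y' i)) u hu
  calc P {ω | u ≤ ⨆ A : 𝒜, ∑ i : Fin k, σ i ω *
          ((↑A : Set (Fin d → ℝ)).indicator (fun _ => (1:ℝ)) (y i) -
            (↑A : Set (Fin d → ℝ)).indicator (fun _ => (1:ℝ)) (y' i))}
      ≤ P (⋃ t ∈ Tfin, {ω | u ≤ f t ω}) := measure_mono hsub
  _ ≤ ∑ t ∈ Tfin, P {ω | u ≤ f t ω} := measure_biUnion_finset_le Tfin _
  _ ≤ ∑ _t ∈ Tfin, ENNReal.ofReal (Real.exp (-u ^ 2 / (2 * k))) :=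
      Finset.sum_le_sum hbound
  _ = (Tfin.card : ℝ≥0∞) * ENNReal.ofReal (Real.exp (-u ^ 2 / (2 * k))) := by
      rw [Finset.sum_const, nsmul_eq_mul]
  _ ≤ (shatterCoeff 𝒜 (2 * k) : ℝ≥0∞) * ENNReal.ofReal (Real.exp (-u ^ 2 / (2 * k))) :=
      mul_le_mul_left (by exact_mod_cast hcard) _
  _ = ENNReal.ofReal ((shatterCoeff 𝒜 (2 * k) : ℝ) * Real.exp (-u ^ 2 / (2 * k))) := by
      rw [ENNReal.ofReal_mul (by positivity), ENNReal.ofReal_natCast]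
end
end
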